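/- arXiv:1312.6503 — 3 statements merged into one kernel-verified Lean document; each statement's English description precedes it below -/
import Mathlib

section
/- Every 4-regular graph of girth at least 7 has Grundy number 5. -/
variable {V : Type*}

/-- `c` is a Grundy coloring of `G`: a proper coloring with positive integer
colors in which every vertex of color `i` has, for each `1 ≤ j < i`, a neighbor
of color `j`. -/
def IsGrundyColoring (G : SimpleGraph V) (c : V → ℕ) : Prop :=
  (∀ v, 1 ≤ c v) ∧
  (∀ v w, G.Adj v w → c v ≠ c w) ∧
  (∀ v j, 1 ≤ j → j < c v → ∃ u, G.Adj v u ∧ c u = j)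

/-- `c` is a Grundy `k`-coloring of `G`: a Grundy coloring using exactly the
colors `1, …, k` (surjectively). -/
def IsGrundyKColoring (G : SimpleGraph V) (c : V → ℕ) (k : ℕ) : Prop :=
  IsGrundyColoring G c ∧ (∀ v, c v ≤ k) ∧ (∀ j, 1 ≤ j → j ≤ k → ∃ v, c v = j)

/-- `G` admits a Grundy `k`-coloring. -/
def GrundyColorable (G : SimpleGraph V) (k : ℕ) : Prop :=
  ∃ c : V → ℕ, IsGrundyKColoring G c k

/-- The Grundy number of `G`: the largest `k` such that `G` admits a Grundy
`k`-coloring. -/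
noncomputable def grundy (G : SimpleGraph V) : ℕ :=
  sSup {k | GrundyColorable G k}

/-- `X` is an independent module of `G`: an independent set of vertices all
having the same neighborhood. -/
def IndepModule (G : SimpleGraph V) (X : Set V) : Prop :=
  (∀ x ∈ X, ∀ y ∈ X, ¬ G.Adj x y) ∧
  (∀ x ∈ X, ∀ y ∈ X, ∀ z, G.Adj x z ↔ G.Adj y z)

/-- The neighborhood of `v` in `G` can be partitioned into `n` independent
modules of `G`. -/
def NbhdPartition (G : SimpleGraph V) (v : V) (n : ℕ) : Prop :=
  ∃ M : Fin n → Set V, (∀ i, IndepModule G (M i)) ∧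
    (∀ i j, i ≠ j → Disjoint (M i) (M j)) ∧
    (⋃ i, M i) = G.neighborSet v

/-- `G` contains an induced 4-cycle. -/
def HasInducedC4 (G : SimpleGraph V) : Prop :=
  ∃ a b c d : V, a ≠ b ∧ a ≠ c ∧ a ≠ d ∧ b ≠ c ∧ b ≠ d ∧ c ≠ d ∧
    G.Adj a b ∧ G.Adj b c ∧ G.Adj c d ∧ G.Adj d a ∧ ¬ G.Adj a c ∧ ¬ G.Adj b d

/-- `G` admits a partial Grundy `k`-coloring: a surjective proper coloring with
colors `1, …, k` such that every color class `j` contains a vertex having, for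
each `1 ≤ i < j`, a neighbor of color `i`. -/
def PartialGrundyColorable (G : SimpleGraph V) (k : ℕ) : Prop :=
  ∃ c : V → ℕ, (∀ v, 1 ≤ c v ∧ c v ≤ k) ∧
    (∀ v w, G.Adj v w → c v ≠ c w) ∧
    (∀ j, 1 ≤ j → j ≤ k →
      ∃ v, c v = j ∧ ∀ i, 1 ≤ i → i < j → ∃ u, G.Adj v u ∧ c u = i)

/-- The partial Grundy number of `G`. -/
noncomputable def partialGrundy (G : SimpleGraph V) : ℕ :=
  sSup {k | PartialGrundyColorable G k}



open SimpleGraph Walk Finset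

section GrundyAux

variable {V : Type*} {G : SimpleGraph V}

private lemma cycle_len (hg : 7 ≤ G.girth) {a : V} {w : G.Walk a a} (hw : w.IsCycle) :
    7 ≤ w.length := by
  have h1 : G.egirth ≤ (w.length : ℕ∞) := iInf_le_of_le a (iInf_le_of_le w (iInf_le _ hw))
  have h2 : G.girth ≤ w.length := by
    have := ENat.toNat_le_toNat h1 (by simp)
    simpa [SimpleGraph.girth] using this
  omega

private lemma noC3 (hg : 7 ≤ G.girth) {a b c : V} (hab : G.Adj a b) (hbc : G.Adj b c)
    (hca : G.Adj c a) : False := by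
  have hw : (Walk.cons hab (Walk.cons hbc (Walk.cons hca Walk.nil))).IsCycle := by
    simp [Walk.isCycle_def, Walk.isTrail_def, Sym2.eq_iff]
    aesop
  have := cycle_len hg hw
  simp at this

private lemma noC4 (hg : 7 ≤ G.girth) {a b c d : V} (hab : G.Adj a b) (hbc : G.Adj b c)
    (hcd : G.Adj c d) (hda : G.Adj d a) (hac : a ≠ c) (hbd : b ≠ d) : False := by
  have hw : (cons hab (cons hbc (cons hcd (cons hda nil)))).IsCycle := by
    simp [Walk.isCycle_def, Walk.isTrail_def, Sym2.eq_iff]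
    aesop
  have := cycle_len hg hw
  simp at this

private lemma noC5 (hg : 7 ≤ G.girth) {a b c d e : V} (hab : G.Adj a b) (hbc : G.Adj b c)
    (hcd : G.Adj c d) (hde : G.Adj d e) (hea : G.Adj e a)
    (hac : a ≠ c) (had : a ≠ d) (hbd : b ≠ d) (hbe : b ≠ e) (hce : c ≠ e) : False := by
  have hw : (cons hab (cons hbc (cons hcd (cons hde (cons hea nil))))).IsCycle := by
    simp [Walk.isCycle_def, Walk.isTrail_def, Sym2.eq_iff]
    aesop
  have := cycle_len hg hw
  simp at this

private lemma noC6 (hg : 7 ≤ G.girth) {a b c d e f : V} (hab : G.Adj a b) (hbc : G.Adj b c)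
    (hcd : G.Adj c d) (hde : G.Adj d e) (hef : G.Adj e f) (hfa : G.Adj f a)
    (hac : a ≠ c) (had : a ≠ d) (hae : a ≠ e) (hbd : b ≠ d) (hbe : b ≠ e) (hbf : b ≠ f)
    (hce : c ≠ e) (hcf : c ≠ f) (hdf : d ≠ f) : False := by
  have hw : (cons hab (cons hbc (cons hcd (cons hde (cons hef (cons hfa nil)))))).IsCycle := by
    simp [Walk.isCycle_def, Walk.isTrail_def, Sym2.eq_iff]
    aesop
  have := cycle_len hg hw
  simp at this

private lemma mex_aux (s : Finset ℕ) : ∃ n, 1 ≤ n ∧ n ∉ s := by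
  refine ⟨s.sup id + 1, by omega, fun h => ?_⟩
  have := Finset.le_sup (f := id) h
  simp only [id] at this
  omega

/-- least positive integer not in `s` -/
private noncomputable def mex (s : Finset ℕ) : ℕ := Nat.find (mex_aux s)

private lemma mex_spec (s : Finset ℕ) : 1 ≤ mex s ∧ mex s ∉ s := Nat.find_spec (mex_aux s)

private lemma mex_min (s : Finset ℕ) {j : ℕ} (h1 : 1 ≤ j) (h2 : j < mex s) : j ∈ s := by
  have := Nat.find_min (mex_aux s) h2
  simp only [not_and, not_not] at this
  exact this h1

private lemma mex_eq (s : Finset ℕ) {i : ℕ} (h1 : 1 ≤ i) (hlow : ∀ j, 1 ≤ j → j < i → j ∈ s)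
    (hi : i ∉ s) : mex s = i := by
  have hle : mex s ≤ i := Nat.find_le ⟨h1, hi⟩
  rcases lt_or_eq_of_le hle with h | h
  · exact absurd (hlow _ (mex_spec s).1 h) (mex_spec s).2
  · exact h

private lemma mex_le_card (s : Finset ℕ) : mex s ≤ s.card + 1 := by
  by_contra h
  push_neg at h
  have hsub : Finset.Icc 1 (s.card + 1) ⊆ s := fun j hj => by
    simp only [Finset.mem_Icc] at hj
    exact mex_min s hj.1 (by omega)
  have := Finset.card_le_card hsub
  simp [Nat.card_Icc] at this

variable [Fintype V] (G) [DecidableRel G.Adj] (emb : V → ℕ)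

private noncomputable def greedy (v : V) : ℕ :=
  mex ((((G.neighborFinset v).filter (fun u => emb u < emb v)).attach).image
    (fun u => greedy u.1))
termination_by emb v
decreasing_by
  have := u.2
  simp only [Finset.mem_filter] at this
  exact this.2

private lemma greedy_eq (v : V) : greedy G emb v =
    mex ((((G.neighborFinset v).filter (fun u => emb u < emb v)).attach).image
      (fun u => greedy G emb u.1)) := by
  rw [greedy]

private lemma greedy_pos (v : V) : 1 ≤ greedy G emb v := by
  rw [greedy_eq]; exact (mex_spec _).1

private lemma greedy_mem_iff {v : V} {j : ℕ} :
    (j ∈ (((G.neighborFinset v).filter (fun u => emb u < emb v)).attach).image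
      (fun u => greedy G emb u.1)) ↔ ∃ u, G.Adj v u ∧ emb u < emb v ∧ greedy G emb u = j := by
  simp [Finset.mem_image, SimpleGraph.mem_neighborFinset]
  tauto

private lemma greedy_lt_ne {v u : V} (hadj : G.Adj v u) (hlt : emb u < emb v) :
    greedy G emb u ≠ greedy G emb v := by
  intro h
  have hmem : greedy G emb v ∈ _ := (greedy_mem_iff G emb).2 ⟨u, hadj, hlt, h⟩
  exact (greedy_eq G emb v ▸ (mex_spec _).2) hmem

private lemma greedy_proper {v u : V} (hadj : G.Adj v u) (hne : emb u ≠ emb v) :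
    greedy G emb u ≠ greedy G emb v := by
  rcases lt_or_gt_of_ne hne with h | h
  · exact greedy_lt_ne G emb hadj h
  · exact fun hh => greedy_lt_ne G emb hadj.symm h hh.symm

private lemma greedy_down {v : V} {j : ℕ} (h1 : 1 ≤ j) (h2 : j < greedy G emb v) :
    ∃ u, G.Adj v u ∧ greedy G emb u = j := by
  rw [greedy_eq] at h2
  obtain ⟨u, hadj, _, hju⟩ := (greedy_mem_iff G emb).1 (mex_min _ h1 h2)
  exact ⟨u, hadj, hju⟩

private lemma greedy_le_degree (v : V) : greedy G emb v ≤ (G.neighborFinset v).card + 1 := by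
  rw [greedy_eq]
  refine (mex_le_card _).trans ?_
  have h1 := Finset.card_image_le (s := ((G.neighborFinset v).filter
    (fun u => emb u < emb v)).attach) (f := fun u => greedy G emb u.1)
  have h2 := Finset.card_filter_le (G.neighborFinset v) (fun u => emb u < emb v)
  simp only [Finset.card_attach] at h1
  omega

private lemma greedy_exact {v : V} {i : ℕ} (h1 : 1 ≤ i)
    (hlow : ∀ j, 1 ≤ j → j < i → ∃ u, G.Adj v u ∧ emb u < emb v ∧ greedy G emb u = j)
    (hno : ∀ u, G.Adj v u → emb u < emb v → greedy G emb u ≠ i) :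
    greedy G emb v = i := by
  rw [greedy_eq]
  refine mex_eq _ h1 (fun j hj1 hj2 => (greedy_mem_iff G emb).2 (hlow j hj1 hj2)) ?_
  intro hmem
  obtain ⟨u, hadj, hlt, hu⟩ := (greedy_mem_iff G emb).1 hmem
  exact hno u hadj hlt hu

private lemma pick1 {s : Finset V} (h : 2 ≤ s.card) (P : V → Prop)
    (hP : ∀ x ∈ s, ∀ y ∈ s, x ≠ y → P x → P y → False) : ∃ x ∈ s, ¬ P x := by
  by_contra hc
  push_neg at hc
  obtain ⟨a, ha, b, hb, hab⟩ := Finset.one_lt_card.mp h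
  exact hP a ha b hb hab (hc a ha) (hc b hb)

private lemma pick2 {s : Finset V} (h : 3 ≤ s.card) (P Q : V → Prop)
    (hP : ∀ x ∈ s, ∀ y ∈ s, x ≠ y → P x → P y → False)
    (hQ : ∀ x ∈ s, ∀ y ∈ s, x ≠ y → Q x → Q y → False) :
    ∃ x ∈ s, ¬ P x ∧ ¬ Q x := by
  by_contra hc
  push_neg at hc
  obtain ⟨a, ha, b, hb, c, hcm, hab, hac, hbc⟩ := Finset.two_lt_card.mp h
  by_cases pa : P a <;> by_cases pb : P b <;> by_cases pc : P c <;>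
    first
    | exact hP a ha b hb hab pa pb
    | exact hP a ha c hcm hac pa pc
    | exact hP b hb c hcm hbc pb pc
    | exact hQ a ha b hb hab (hc a ha pa) (hc b hb pb)
    | exact hQ a ha c hcm hac (hc a ha pa) (hc c hcm pc)
    | exact hQ b hb c hcm hbc (hc b hb pb) (hc c hcm pc)

private lemma grundyColorable_le_five {V : Type*} [Fintype V] (G : SimpleGraph V)
    [DecidableRel G.Adj] (hreg : G.IsRegularOfDegree 4) {k : ℕ}
    (h : GrundyColorable G k) : k ≤ 5 := by
  by_contra hc
  push_neg at hc
  obtain ⟨c, ⟨⟨hpos, hprop, hdown⟩, hle, hsurj⟩⟩ := h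
  obtain ⟨v, hv⟩ := hsurj 6 (by omega) (by omega)
  have hex : ∀ j : ℕ, ∃ u, 1 ≤ j → j ≤ 5 → G.Adj v u ∧ c u = j := by
    intro j
    by_cases hj : 1 ≤ j ∧ j ≤ 5
    · obtain ⟨u, hu⟩ := hdown v j hj.1 (by omega)
      exact ⟨u, fun _ _ => hu⟩
    · exact ⟨v, fun h1 h2 => absurd ⟨h1, h2⟩ hj⟩
  choose F hF using hex
  have hmaps : ∀ i ∈ Finset.Icc 1 5, F i ∈ G.neighborFinset v := fun i hi => by
    simp only [Finset.mem_Icc] at hi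
    exact (SimpleGraph.mem_neighborFinset _ _ _).mpr ((hF i hi.1 hi.2).1)
  have hinj : Set.InjOn F (Finset.Icc 1 5) := by
    intro i hi j hj hij
    simp only [Finset.coe_Icc, Set.mem_Icc] at hi hj
    have h1 := (hF i hi.1 hi.2).2
    have h2 := (hF j hj.1 hj.2).2
    rw [hij] at h1
    omega
  have hcard := Finset.card_le_card_of_injOn F hmaps hinj
  have h4 : (G.neighborFinset v).card = 4 := hreg v
  rw [Nat.card_Icc, h4] at hcard
  omega

end GrundyAux

set_option maxHeartbeats 3200000 in
theorem fourRegular_girth_ge_seven_grundy {V : Type*} [Fintype V] [Nonempty V]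
    (G : SimpleGraph V) [DecidableRel G.Adj]
    (hreg : G.IsRegularOfDegree 4) (hg : 7 ≤ G.girth) :
    grundy G = 5 := by
  classical
  have hcard : ∀ v : V, (G.neighborFinset v).card = 4 := fun v => hreg v
  obtain ⟨r⟩ := ‹Nonempty V›
  -- pick n4, n3, n2, n1 : the four neighbours of r
  obtain ⟨n4, hn4m⟩ := Finset.card_pos.mp (show 0 < (G.neighborFinset r).card by
    rw [hcard r]; norm_num)
  obtain ⟨n3, hn3m'⟩ := Finset.card_pos.mp (show 0 < ((G.neighborFinset r).erase n4).card by
    rw [Finset.card_erase_of_mem hn4m, hcard r]; norm_num)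
  obtain ⟨hne34, hn3m⟩ := Finset.mem_erase.mp hn3m'
  obtain ⟨n2, hn2m'⟩ := Finset.card_pos.mp
    (show 0 < (((G.neighborFinset r).erase n4).erase n3).card by
      rw [Finset.card_erase_of_mem hn3m', Finset.card_erase_of_mem hn4m, hcard r]; norm_num)
  obtain ⟨hne23, hn2m''⟩ := Finset.mem_erase.mp hn2m'
  obtain ⟨hne24, hn2m⟩ := Finset.mem_erase.mp hn2m''
  obtain ⟨n1, hn1m'⟩ := Finset.card_pos.mp
    (show 0 < ((((G.neighborFinset r).erase n4).erase n3).erase n2).card by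
      rw [Finset.card_erase_of_mem hn2m', Finset.card_erase_of_mem hn3m',
        Finset.card_erase_of_mem hn4m, hcard r]; norm_num)
  obtain ⟨hne12, hn1m''⟩ := Finset.mem_erase.mp hn1m'
  obtain ⟨hne13, hn1m'''⟩ := Finset.mem_erase.mp hn1m''
  obtain ⟨hne14, hn1m⟩ := Finset.mem_erase.mp hn1m'''
  have ad_r_n4 : G.Adj r n4 := (SimpleGraph.mem_neighborFinset _ _ _).mp hn4m
  have ad_r_n3 : G.Adj r n3 := (SimpleGraph.mem_neighborFinset _ _ _).mp hn3m
  have ad_r_n2 : G.Adj r n2 := (SimpleGraph.mem_neighborFinset _ _ _).mp hn2m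
  have ad_r_n1 : G.Adj r n1 := (SimpleGraph.mem_neighborFinset _ _ _).mp hn1m
  have ne_n4_n3 : n4 ≠ n3 := hne34.symm
  have ne_n4_n2 : n4 ≠ n2 := hne24.symm
  have ne_n4_n1 : n4 ≠ n1 := hne14.symm
  have ne_n3_n2 : n3 ≠ n2 := hne23.symm
  have ne_n3_n1 : n3 ≠ n1 := hne13.symm
  have ne_n2_n1 : n2 ≠ n1 := hne12.symm
  -- pick a2 : a neighbour of n3 other than r
  obtain ⟨a2, ha2m'⟩ := Finset.card_pos.mp (show 0 < ((G.neighborFinset n3).erase r).card by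
    rw [Finset.card_erase_of_mem ((SimpleGraph.mem_neighborFinset _ _ _).mpr ad_r_n3.symm), hcard]
    norm_num)
  obtain ⟨hnea2r, ha2m⟩ := Finset.mem_erase.mp ha2m'
  have ad_n3_a2 : G.Adj n3 a2 := (SimpleGraph.mem_neighborFinset _ _ _).mp ha2m
  have ne_r_a2 : r ≠ a2 := hnea2r.symm
  -- pick c3, c2, c1 : the three neighbours of n4 other than r
  obtain ⟨c3, hc3m'⟩ := Finset.card_pos.mp (show 0 < ((G.neighborFinset n4).erase r).card by
    rw [Finset.card_erase_of_mem ((SimpleGraph.mem_neighborFinset _ _ _).mpr ad_r_n4.symm), hcard]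
    norm_num)
  obtain ⟨hnec3r, hc3m⟩ := Finset.mem_erase.mp hc3m'
  obtain ⟨c2, hc2m'⟩ := Finset.card_pos.mp
    (show 0 < (((G.neighborFinset n4).erase r).erase c3).card by
      rw [Finset.card_erase_of_mem hc3m',
        Finset.card_erase_of_mem ((SimpleGraph.mem_neighborFinset _ _ _).mpr ad_r_n4.symm), hcard]
      norm_num)
  obtain ⟨hnec23, hc2m''⟩ := Finset.mem_erase.mp hc2m'
  obtain ⟨hnec2r, hc2m⟩ := Finset.mem_erase.mp hc2m''
  obtain ⟨c1, hc1m'⟩ := Finset.card_pos.mp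
    (show 0 < ((((G.neighborFinset n4).erase r).erase c3).erase c2).card by
      rw [Finset.card_erase_of_mem hc2m', Finset.card_erase_of_mem hc3m',
        Finset.card_erase_of_mem ((SimpleGraph.mem_neighborFinset _ _ _).mpr ad_r_n4.symm), hcard]
      norm_num)
  obtain ⟨hnec12, hc1m''⟩ := Finset.mem_erase.mp hc1m'
  obtain ⟨hnec13, hc1m'''⟩ := Finset.mem_erase.mp hc1m''
  obtain ⟨hnec1r, hc1m⟩ := Finset.mem_erase.mp hc1m'''
  have ad_n4_c3 : G.Adj n4 c3 := (SimpleGraph.mem_neighborFinset _ _ _).mp hc3m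
  have ad_n4_c2 : G.Adj n4 c2 := (SimpleGraph.mem_neighborFinset _ _ _).mp hc2m
  have ad_n4_c1 : G.Adj n4 c1 := (SimpleGraph.mem_neighborFinset _ _ _).mp hc1m
  have ne_r_c3 : r ≠ c3 := hnec3r.symm
  have ne_r_c2 : r ≠ c2 := hnec2r.symm
  have ne_r_c1 : r ≠ c1 := hnec1r.symm
  have ne_c3_c2 : c3 ≠ c2 := hnec23.symm
  have ne_c3_c1 : c3 ≠ c1 := hnec13.symm
  have ne_c2_c1 : c2 ≠ c1 := hnec12.symm
  -- pick d1 : a neighbour of c2 other than n4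
  obtain ⟨d1, hd1m'⟩ := Finset.card_pos.mp (show 0 < ((G.neighborFinset c2).erase n4).card by
    rw [Finset.card_erase_of_mem ((SimpleGraph.mem_neighborFinset _ _ _).mpr ad_n4_c2.symm), hcard]
    norm_num)
  obtain ⟨hned1n4, hd1m⟩ := Finset.mem_erase.mp hd1m'
  have ad_c2_d1 : G.Adj c2 d1 := (SimpleGraph.mem_neighborFinset _ _ _).mp hd1m
  have ne_n4_d1 : n4 ≠ d1 := hned1n4.symm
  -- pick e2, e1 : two neighbours of c3 other than n4
  obtain ⟨e2, he2m'⟩ := Finset.card_pos.mp (show 0 < ((G.neighborFinset c3).erase n4).card by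
    rw [Finset.card_erase_of_mem ((SimpleGraph.mem_neighborFinset _ _ _).mpr ad_n4_c3.symm), hcard]
    norm_num)
  obtain ⟨hnee2n4, he2m⟩ := Finset.mem_erase.mp he2m'
  obtain ⟨e1, he1m'⟩ := Finset.card_pos.mp
    (show 0 < (((G.neighborFinset c3).erase n4).erase e2).card by
      rw [Finset.card_erase_of_mem he2m',
        Finset.card_erase_of_mem ((SimpleGraph.mem_neighborFinset _ _ _).mpr ad_n4_c3.symm), hcard]
      norm_num)
  obtain ⟨hnee12, he1m''⟩ := Finset.mem_erase.mp he1m'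
  obtain ⟨hnee1n4, he1m⟩ := Finset.mem_erase.mp he1m''
  have ad_c3_e2 : G.Adj c3 e2 := (SimpleGraph.mem_neighborFinset _ _ _).mp he2m
  have ad_c3_e1 : G.Adj c3 e1 := (SimpleGraph.mem_neighborFinset _ _ _).mp he1m
  have ne_n4_e2 : n4 ≠ e2 := hnee2n4.symm
  have ne_n4_e1 : n4 ≠ e1 := hnee1n4.symm
  have ne_e2_e1 : e2 ≠ e1 := hnee12.symm
  have ne_r_n4 : r ≠ n4 := (ad_r_n4).ne
  have ne_r_n3 : r ≠ n3 := (ad_r_n3).ne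
  have ne_r_n2 : r ≠ n2 := (ad_r_n2).ne
  have ne_r_n1 : r ≠ n1 := (ad_r_n1).ne
  have ne_n4_c3 : n4 ≠ c3 := (ad_n4_c3).ne
  have ne_n4_c2 : n4 ≠ c2 := (ad_n4_c2).ne
  have ne_n4_c1 : n4 ≠ c1 := (ad_n4_c1).ne
  have ne_n3_a2 : n3 ≠ a2 := (ad_n3_a2).ne
  have ne_c3_e2 : c3 ≠ e2 := (ad_c3_e2).ne
  have ne_c3_e1 : c3 ≠ e1 := (ad_c3_e1).ne
  have ne_c2_d1 : c2 ≠ d1 := (ad_c2_d1).ne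
  have ne_r_d1 : r ≠ d1 := fun h => noC3 hg ad_r_n4 ad_n4_c2 (by rw [h]; exact ad_c2_d1)
  have ne_r_e2 : r ≠ e2 := fun h => noC3 hg ad_r_n4 ad_n4_c3 (by rw [h]; exact ad_c3_e2)
  have ne_r_e1 : r ≠ e1 := fun h => noC3 hg ad_r_n4 ad_n4_c3 (by rw [h]; exact ad_c3_e1)
  have ne_n4_a2 : n4 ≠ a2 := fun h => noC3 hg ad_r_n4.symm ad_r_n3 (by rw [h]; exact ad_n3_a2)
  have ne_n3_c3 : n3 ≠ c3 := fun h => noC3 hg ad_r_n3.symm ad_r_n4 (by rw [h]; exact ad_n4_c3)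
  have ne_n3_c2 : n3 ≠ c2 := fun h => noC3 hg ad_r_n3.symm ad_r_n4 (by rw [h]; exact ad_n4_c2)
  have ne_n3_c1 : n3 ≠ c1 := fun h => noC3 hg ad_r_n3.symm ad_r_n4 (by rw [h]; exact ad_n4_c1)
  have ne_n2_a2 : n2 ≠ a2 := fun h => noC3 hg ad_r_n2.symm ad_r_n3 (by rw [h]; exact ad_n3_a2)
  have ne_n2_c3 : n2 ≠ c3 := fun h => noC3 hg ad_r_n2.symm ad_r_n4 (by rw [h]; exact ad_n4_c3)
  have ne_n2_c2 : n2 ≠ c2 := fun h => noC3 hg ad_r_n2.symm ad_r_n4 (by rw [h]; exact ad_n4_c2)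
  have ne_n2_c1 : n2 ≠ c1 := fun h => noC3 hg ad_r_n2.symm ad_r_n4 (by rw [h]; exact ad_n4_c1)
  have ne_n1_a2 : n1 ≠ a2 := fun h => noC3 hg ad_r_n1.symm ad_r_n3 (by rw [h]; exact ad_n3_a2)
  have ne_n1_c3 : n1 ≠ c3 := fun h => noC3 hg ad_r_n1.symm ad_r_n4 (by rw [h]; exact ad_n4_c3)
  have ne_n1_c2 : n1 ≠ c2 := fun h => noC3 hg ad_r_n1.symm ad_r_n4 (by rw [h]; exact ad_n4_c2)
  have ne_n1_c1 : n1 ≠ c1 := fun h => noC3 hg ad_r_n1.symm ad_r_n4 (by rw [h]; exact ad_n4_c1)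
  have ne_c3_d1 : c3 ≠ d1 := fun h => noC3 hg ad_n4_c3.symm ad_n4_c2 (by rw [h]; exact ad_c2_d1)
  have ne_c2_e2 : c2 ≠ e2 := fun h => noC3 hg ad_n4_c2.symm ad_n4_c3 (by rw [h]; exact ad_c3_e2)
  have ne_c2_e1 : c2 ≠ e1 := fun h => noC3 hg ad_n4_c2.symm ad_n4_c3 (by rw [h]; exact ad_c3_e1)
  have ne_c1_d1 : c1 ≠ d1 := fun h => noC3 hg ad_n4_c1.symm ad_n4_c2 (by rw [h]; exact ad_c2_d1)
  have ne_c1_e2 : c1 ≠ e2 := fun h => noC3 hg ad_n4_c1.symm ad_n4_c3 (by rw [h]; exact ad_c3_e2)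
  have ne_c1_e1 : c1 ≠ e1 := fun h => noC3 hg ad_n4_c1.symm ad_n4_c3 (by rw [h]; exact ad_c3_e1)
  have ne_n3_d1 : n3 ≠ d1 := fun h => noC4 hg ad_r_n3.symm ad_r_n4 ad_n4_c2 (by rw [h]; exact ad_c2_d1) ne_n4_n3.symm ne_r_c2
  have ne_n3_e2 : n3 ≠ e2 := fun h => noC4 hg ad_r_n3.symm ad_r_n4 ad_n4_c3 (by rw [h]; exact ad_c3_e2) ne_n4_n3.symm ne_r_c3
  have ne_n3_e1 : n3 ≠ e1 := fun h => noC4 hg ad_r_n3.symm ad_r_n4 ad_n4_c3 (by rw [h]; exact ad_c3_e1) ne_n4_n3.symm ne_r_c3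
  have ne_n2_d1 : n2 ≠ d1 := fun h => noC4 hg ad_r_n2.symm ad_r_n4 ad_n4_c2 (by rw [h]; exact ad_c2_d1) ne_n4_n2.symm ne_r_c2
  have ne_n2_e2 : n2 ≠ e2 := fun h => noC4 hg ad_r_n2.symm ad_r_n4 ad_n4_c3 (by rw [h]; exact ad_c3_e2) ne_n4_n2.symm ne_r_c3
  have ne_n2_e1 : n2 ≠ e1 := fun h => noC4 hg ad_r_n2.symm ad_r_n4 ad_n4_c3 (by rw [h]; exact ad_c3_e1) ne_n4_n2.symm ne_r_c3
  have ne_n1_d1 : n1 ≠ d1 := fun h => noC4 hg ad_r_n1.symm ad_r_n4 ad_n4_c2 (by rw [h]; exact ad_c2_d1) ne_n4_n1.symm ne_r_c2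
  have ne_n1_e2 : n1 ≠ e2 := fun h => noC4 hg ad_r_n1.symm ad_r_n4 ad_n4_c3 (by rw [h]; exact ad_c3_e2) ne_n4_n1.symm ne_r_c3
  have ne_n1_e1 : n1 ≠ e1 := fun h => noC4 hg ad_r_n1.symm ad_r_n4 ad_n4_c3 (by rw [h]; exact ad_c3_e1) ne_n4_n1.symm ne_r_c3
  have ne_a2_c3 : a2 ≠ c3 := fun h => noC4 hg ad_n3_a2.symm ad_r_n3.symm ad_r_n4 (by rw [h]; exact ad_n4_c3) ne_r_a2.symm ne_n4_n3.symm
  have ne_a2_c2 : a2 ≠ c2 := fun h => noC4 hg ad_n3_a2.symm ad_r_n3.symm ad_r_n4 (by rw [h]; exact ad_n4_c2) ne_r_a2.symm ne_n4_n3.symm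
  have ne_a2_c1 : a2 ≠ c1 := fun h => noC4 hg ad_n3_a2.symm ad_r_n3.symm ad_r_n4 (by rw [h]; exact ad_n4_c1) ne_r_a2.symm ne_n4_n3.symm
  have ne_d1_e2 : d1 ≠ e2 := fun h => noC4 hg ad_c2_d1.symm ad_n4_c2.symm ad_n4_c3 (by rw [h]; exact ad_c3_e2) ne_n4_d1.symm ne_c3_c2.symm
  have ne_d1_e1 : d1 ≠ e1 := fun h => noC4 hg ad_c2_d1.symm ad_n4_c2.symm ad_n4_c3 (by rw [h]; exact ad_c3_e1) ne_n4_d1.symm ne_c3_c2.symm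
  have ne_a2_d1 : a2 ≠ d1 := fun h => noC5 hg ad_n3_a2.symm ad_r_n3.symm ad_r_n4 ad_n4_c2 (by rw [h]; exact ad_c2_d1) ne_r_a2.symm ne_n4_a2.symm ne_n4_n3.symm ne_n3_c2 ne_r_c2
  have ne_a2_e2 : a2 ≠ e2 := fun h => noC5 hg ad_n3_a2.symm ad_r_n3.symm ad_r_n4 ad_n4_c3 (by rw [h]; exact ad_c3_e2) ne_r_a2.symm ne_n4_a2.symm ne_n4_n3.symm ne_n3_c3 ne_r_c3
  have ne_a2_e1 : a2 ≠ e1 := fun h => noC5 hg ad_n3_a2.symm ad_r_n3.symm ad_r_n4 ad_n4_c3 (by rw [h]; exact ad_c3_e1) ne_r_a2.symm ne_n4_a2.symm ne_n4_n3.symm ne_n3_c3 ne_r_c3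
  -- pick b1 : a neighbour of a2, other than n3, not adjacent to d1 nor e1
  have hsb1 : 3 ≤ ((G.neighborFinset a2).erase n3).card := by
    rw [Finset.card_erase_of_mem ((SimpleGraph.mem_neighborFinset _ _ _).mpr ad_n3_a2.symm), hcard]
  obtain ⟨b1, hb1m', nadj_b1_d1, nadj_b1_e1⟩ := pick2 hsb1
    (fun x => G.Adj x d1) (fun x => G.Adj x e1)
    (by
      intro x hx y hy hxy px py
      have hax : G.Adj a2 x := (SimpleGraph.mem_neighborFinset _ _ _).mp (Finset.mem_erase.mp hx).2
      have hay : G.Adj a2 y := (SimpleGraph.mem_neighborFinset _ _ _).mp (Finset.mem_erase.mp hy).2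
      exact noC4 hg hax px py.symm hay.symm ne_a2_d1 hxy)
    (by
      intro x hx y hy hxy px py
      have hax : G.Adj a2 x := (SimpleGraph.mem_neighborFinset _ _ _).mp (Finset.mem_erase.mp hx).2
      have hay : G.Adj a2 y := (SimpleGraph.mem_neighborFinset _ _ _).mp (Finset.mem_erase.mp hy).2
      exact noC4 hg hax px py.symm hay.symm ne_a2_e1 hxy)
  obtain ⟨hneb1n3, hb1m⟩ := Finset.mem_erase.mp hb1m'
  have ad_a2_b1 : G.Adj a2 b1 := (SimpleGraph.mem_neighborFinset _ _ _).mp hb1m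
  have ne_n3_b1 : n3 ≠ b1 := hneb1n3.symm
  have ne_a2_b1 : a2 ≠ b1 := (ad_a2_b1).ne
  have ne_r_b1 : r ≠ b1 := fun h => noC3 hg ad_r_n3 ad_n3_a2 (by rw [h]; exact ad_a2_b1)
  have ne_n4_b1 : n4 ≠ b1 := fun h => noC4 hg ad_r_n4.symm ad_r_n3 ad_n3_a2 (by rw [h]; exact ad_a2_b1) ne_n4_n3 ne_r_a2
  have ne_n2_b1 : n2 ≠ b1 := fun h => noC4 hg ad_r_n2.symm ad_r_n3 ad_n3_a2 (by rw [h]; exact ad_a2_b1) ne_n3_n2.symm ne_r_a2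
  have ne_n1_b1 : n1 ≠ b1 := fun h => noC4 hg ad_r_n1.symm ad_r_n3 ad_n3_a2 (by rw [h]; exact ad_a2_b1) ne_n3_n1.symm ne_r_a2
  have ne_c3_b1 : c3 ≠ b1 := fun h => noC5 hg ad_n4_c3.symm ad_r_n4.symm ad_r_n3 ad_n3_a2 (by rw [h]; exact ad_a2_b1) ne_r_c3.symm ne_n3_c3.symm ne_n4_n3 ne_n4_a2 ne_r_a2
  have ne_c2_b1 : c2 ≠ b1 := fun h => noC5 hg ad_n4_c2.symm ad_r_n4.symm ad_r_n3 ad_n3_a2 (by rw [h]; exact ad_a2_b1) ne_r_c2.symm ne_n3_c2.symm ne_n4_n3 ne_n4_a2 ne_r_a2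
  have ne_c1_b1 : c1 ≠ b1 := fun h => noC5 hg ad_n4_c1.symm ad_r_n4.symm ad_r_n3 ad_n3_a2 (by rw [h]; exact ad_a2_b1) ne_r_c1.symm ne_n3_c1.symm ne_n4_n3 ne_n4_a2 ne_r_a2
  have ne_d1_b1 : d1 ≠ b1 := fun h => noC6 hg ad_c2_d1.symm ad_n4_c2.symm ad_r_n4.symm ad_r_n3 ad_n3_a2 (by rw [h]; exact ad_a2_b1) ne_n4_d1.symm ne_r_d1.symm ne_n3_d1.symm ne_r_c2.symm ne_n3_c2.symm ne_a2_c2.symm ne_n4_n3 ne_n4_a2 ne_r_a2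
  have ne_e2_b1 : e2 ≠ b1 := fun h => noC6 hg ad_c3_e2.symm ad_n4_c3.symm ad_r_n4.symm ad_r_n3 ad_n3_a2 (by rw [h]; exact ad_a2_b1) ne_n4_e2.symm ne_r_e2.symm ne_n3_e2.symm ne_r_c3.symm ne_n3_c3.symm ne_a2_c3.symm ne_n4_n3 ne_n4_a2 ne_r_a2
  have ne_e1_b1 : e1 ≠ b1 := fun h => noC6 hg ad_c3_e1.symm ad_n4_c3.symm ad_r_n4.symm ad_r_n3 ad_n3_a2 (by rw [h]; exact ad_a2_b1) ne_n4_e1.symm ne_r_e1.symm ne_n3_e1.symm ne_r_c3.symm ne_n3_c3.symm ne_a2_c3.symm ne_n4_n3 ne_n4_a2 ne_r_a2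
  -- pick lv : a neighbour of e2, other than c3, distinct from and not adjacent to b1
  have hslv : 2 ≤ ((G.neighborFinset e2).erase c3).card := by
    rw [Finset.card_erase_of_mem ((SimpleGraph.mem_neighborFinset _ _ _).mpr ad_c3_e2.symm), hcard]
    norm_num
  obtain ⟨lv, hlvm', hlvP⟩ := pick1 hslv (fun x => x = b1 ∨ G.Adj x b1)
    (by
      intro x hx y hy hxy px py
      have hax : G.Adj e2 x := (SimpleGraph.mem_neighborFinset _ _ _).mp (Finset.mem_erase.mp hx).2
      have hay : G.Adj e2 y := (SimpleGraph.mem_neighborFinset _ _ _).mp (Finset.mem_erase.mp hy).2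
      rcases px with rfl | px
      · rcases py with rfl | py
        · exact hxy rfl
        · exact noC3 hg hay py hax.symm
      · rcases py with rfl | py
        · exact noC3 hg hax px hay.symm
        · exact noC4 hg hax px py.symm hay.symm ne_e2_b1 hxy)
  obtain ⟨hnelvc3, hlvm⟩ := Finset.mem_erase.mp hlvm'
  have ad_e2_lv : G.Adj e2 lv := (SimpleGraph.mem_neighborFinset _ _ _).mp hlvm
  have ne_c3_lv : c3 ≠ lv := hnelvc3.symm
  have ne_b1_lv : b1 ≠ lv := fun h => hlvP (Or.inl h.symm)
  have nadj_b1_lv : ¬ G.Adj b1 lv := fun h => hlvP (Or.inr h.symm)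
  have ne_e2_lv : e2 ≠ lv := (ad_e2_lv).ne
  have ne_n4_lv : n4 ≠ lv := fun h => noC3 hg ad_n4_c3 ad_c3_e2 (by rw [h]; exact ad_e2_lv)
  have ne_e1_lv : e1 ≠ lv := fun h => noC3 hg ad_c3_e1.symm ad_c3_e2 (by rw [h]; exact ad_e2_lv)
  have ne_r_lv : r ≠ lv := fun h => noC4 hg ad_r_n4 ad_n4_c3 ad_c3_e2 (by rw [h]; exact ad_e2_lv) ne_r_c3 ne_n4_e2
  have ne_c2_lv : c2 ≠ lv := fun h => noC4 hg ad_n4_c2.symm ad_n4_c3 ad_c3_e2 (by rw [h]; exact ad_e2_lv) ne_c3_c2.symm ne_n4_e2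
  have ne_c1_lv : c1 ≠ lv := fun h => noC4 hg ad_n4_c1.symm ad_n4_c3 ad_c3_e2 (by rw [h]; exact ad_e2_lv) ne_c3_c1.symm ne_n4_e2
  have ne_n3_lv : n3 ≠ lv := fun h => noC5 hg ad_r_n3.symm ad_r_n4 ad_n4_c3 ad_c3_e2 (by rw [h]; exact ad_e2_lv) ne_n4_n3.symm ne_n3_c3 ne_r_c3 ne_r_e2 ne_n4_e2
  have ne_n2_lv : n2 ≠ lv := fun h => noC5 hg ad_r_n2.symm ad_r_n4 ad_n4_c3 ad_c3_e2 (by rw [h]; exact ad_e2_lv) ne_n4_n2.symm ne_n2_c3 ne_r_c3 ne_r_e2 ne_n4_e2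
  have ne_n1_lv : n1 ≠ lv := fun h => noC5 hg ad_r_n1.symm ad_r_n4 ad_n4_c3 ad_c3_e2 (by rw [h]; exact ad_e2_lv) ne_n4_n1.symm ne_n1_c3 ne_r_c3 ne_r_e2 ne_n4_e2
  have ne_d1_lv : d1 ≠ lv := fun h => noC5 hg ad_c2_d1.symm ad_n4_c2.symm ad_n4_c3 ad_c3_e2 (by rw [h]; exact ad_e2_lv) ne_n4_d1.symm ne_c3_d1.symm ne_c3_c2.symm ne_c2_e2 ne_n4_e2
  have ne_a2_lv : a2 ≠ lv := fun h => noC6 hg ad_n3_a2.symm ad_r_n3.symm ad_r_n4 ad_n4_c3 ad_c3_e2 (by rw [h]; exact ad_e2_lv) ne_r_a2.symm ne_n4_a2.symm ne_a2_c3 ne_n4_n3.symm ne_n3_c3 ne_n3_e2 ne_r_c3 ne_r_e2 ne_n4_e2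
  -- pick f1 : a neighbour of n2, other than r, not adjacent to lv
  have hsf1 : 2 ≤ ((G.neighborFinset n2).erase r).card := by
    rw [Finset.card_erase_of_mem ((SimpleGraph.mem_neighborFinset _ _ _).mpr ad_r_n2.symm), hcard]
    norm_num
  obtain ⟨f1, hf1m', nadj_f1_lv⟩ := pick1 hsf1 (fun x => G.Adj x lv)
    (by
      intro x hx y hy hxy px py
      have hax : G.Adj n2 x := (SimpleGraph.mem_neighborFinset _ _ _).mp (Finset.mem_erase.mp hx).2
      have hay : G.Adj n2 y := (SimpleGraph.mem_neighborFinset _ _ _).mp (Finset.mem_erase.mp hy).2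
      exact noC4 hg hax px py.symm hay.symm ne_n2_lv hxy)
  obtain ⟨hnef1r, hf1m⟩ := Finset.mem_erase.mp hf1m'
  have ad_n2_f1 : G.Adj n2 f1 := (SimpleGraph.mem_neighborFinset _ _ _).mp hf1m
  have ne_r_f1 : r ≠ f1 := hnef1r.symm
  have ne_n2_f1 : n2 ≠ f1 := (ad_n2_f1).ne
  have ne_n4_f1 : n4 ≠ f1 := fun h => noC3 hg ad_r_n4.symm ad_r_n2 (by rw [h]; exact ad_n2_f1)
  have ne_n3_f1 : n3 ≠ f1 := fun h => noC3 hg ad_r_n3.symm ad_r_n2 (by rw [h]; exact ad_n2_f1)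
  have ne_n1_f1 : n1 ≠ f1 := fun h => noC3 hg ad_r_n1.symm ad_r_n2 (by rw [h]; exact ad_n2_f1)
  have ne_a2_f1 : a2 ≠ f1 := fun h => noC4 hg ad_n3_a2.symm ad_r_n3.symm ad_r_n2 (by rw [h]; exact ad_n2_f1) ne_r_a2.symm ne_n3_n2
  have ne_c3_f1 : c3 ≠ f1 := fun h => noC4 hg ad_n4_c3.symm ad_r_n4.symm ad_r_n2 (by rw [h]; exact ad_n2_f1) ne_r_c3.symm ne_n4_n2
  have ne_c2_f1 : c2 ≠ f1 := fun h => noC4 hg ad_n4_c2.symm ad_r_n4.symm ad_r_n2 (by rw [h]; exact ad_n2_f1) ne_r_c2.symm ne_n4_n2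
  have ne_c1_f1 : c1 ≠ f1 := fun h => noC4 hg ad_n4_c1.symm ad_r_n4.symm ad_r_n2 (by rw [h]; exact ad_n2_f1) ne_r_c1.symm ne_n4_n2
  have ne_d1_f1 : d1 ≠ f1 := fun h => noC5 hg ad_c2_d1.symm ad_n4_c2.symm ad_r_n4.symm ad_r_n2 (by rw [h]; exact ad_n2_f1) ne_n4_d1.symm ne_r_d1.symm ne_r_c2.symm ne_n2_c2.symm ne_n4_n2
  have ne_e2_f1 : e2 ≠ f1 := fun h => noC5 hg ad_c3_e2.symm ad_n4_c3.symm ad_r_n4.symm ad_r_n2 (by rw [h]; exact ad_n2_f1) ne_n4_e2.symm ne_r_e2.symm ne_r_c3.symm ne_n2_c3.symm ne_n4_n2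
  have ne_e1_f1 : e1 ≠ f1 := fun h => noC5 hg ad_c3_e1.symm ad_n4_c3.symm ad_r_n4.symm ad_r_n2 (by rw [h]; exact ad_n2_f1) ne_n4_e1.symm ne_r_e1.symm ne_r_c3.symm ne_n2_c3.symm ne_n4_n2
  have ne_b1_f1 : b1 ≠ f1 := fun h => noC5 hg ad_a2_b1.symm ad_n3_a2.symm ad_r_n3.symm ad_r_n2 (by rw [h]; exact ad_n2_f1) ne_n3_b1.symm ne_r_b1.symm ne_r_a2.symm ne_n2_a2.symm ne_n3_n2
  have ne_lv_f1 : lv ≠ f1 := fun h => noC6 hg ad_e2_lv.symm ad_c3_e2.symm ad_n4_c3.symm ad_r_n4.symm ad_r_n2 (by rw [h]; exact ad_n2_f1) ne_c3_lv.symm ne_n4_lv.symm ne_r_lv.symm ne_n4_e2.symm ne_r_e2.symm ne_n2_e2.symm ne_r_c3.symm ne_n2_c3.symm ne_n4_n2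
  -- pick a1 : a neighbour of n3, other than r and a2, not adjacent to lv
  have hsa1 : 2 ≤ (((G.neighborFinset n3).erase r).erase a2).card := by
    rw [Finset.card_erase_of_mem ha2m',
      Finset.card_erase_of_mem ((SimpleGraph.mem_neighborFinset _ _ _).mpr ad_r_n3.symm), hcard]
  obtain ⟨a1, ha1m', nadj_a1_lv⟩ := pick1 hsa1 (fun x => G.Adj x lv)
    (by
      intro x hx y hy hxy px py
      have hax : G.Adj n3 x := (SimpleGraph.mem_neighborFinset _ _ _).mp
        (Finset.mem_erase.mp (Finset.mem_erase.mp hx).2).2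
      have hay : G.Adj n3 y := (SimpleGraph.mem_neighborFinset _ _ _).mp
        (Finset.mem_erase.mp (Finset.mem_erase.mp hy).2).2
      exact noC4 hg hax px py.symm hay.symm ne_n3_lv hxy)
  obtain ⟨hnea1a2, ha1m''⟩ := Finset.mem_erase.mp ha1m'
  obtain ⟨hnea1r, ha1m⟩ := Finset.mem_erase.mp ha1m''
  have ad_n3_a1 : G.Adj n3 a1 := (SimpleGraph.mem_neighborFinset _ _ _).mp ha1m
  have ne_r_a1 : r ≠ a1 := hnea1r.symm
  have ne_a2_a1 : a2 ≠ a1 := hnea1a2.symm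
  have ne_n3_a1 : n3 ≠ a1 := (ad_n3_a1).ne
  have ne_n4_a1 : n4 ≠ a1 := fun h => noC3 hg ad_r_n4.symm ad_r_n3 (by rw [h]; exact ad_n3_a1)
  have ne_n2_a1 : n2 ≠ a1 := fun h => noC3 hg ad_r_n2.symm ad_r_n3 (by rw [h]; exact ad_n3_a1)
  have ne_n1_a1 : n1 ≠ a1 := fun h => noC3 hg ad_r_n1.symm ad_r_n3 (by rw [h]; exact ad_n3_a1)
  have ne_b1_a1 : b1 ≠ a1 := fun h => noC3 hg ad_a2_b1.symm ad_n3_a2.symm (by rw [h]; exact ad_n3_a1)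
  have ne_c3_a1 : c3 ≠ a1 := fun h => noC4 hg ad_n4_c3.symm ad_r_n4.symm ad_r_n3 (by rw [h]; exact ad_n3_a1) ne_r_c3.symm ne_n4_n3
  have ne_c2_a1 : c2 ≠ a1 := fun h => noC4 hg ad_n4_c2.symm ad_r_n4.symm ad_r_n3 (by rw [h]; exact ad_n3_a1) ne_r_c2.symm ne_n4_n3
  have ne_c1_a1 : c1 ≠ a1 := fun h => noC4 hg ad_n4_c1.symm ad_r_n4.symm ad_r_n3 (by rw [h]; exact ad_n3_a1) ne_r_c1.symm ne_n4_n3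
  have ne_f1_a1 : f1 ≠ a1 := fun h => noC4 hg ad_n2_f1.symm ad_r_n2.symm ad_r_n3 (by rw [h]; exact ad_n3_a1) ne_r_f1.symm ne_n3_n2.symm
  have ne_d1_a1 : d1 ≠ a1 := fun h => noC5 hg ad_c2_d1.symm ad_n4_c2.symm ad_r_n4.symm ad_r_n3 (by rw [h]; exact ad_n3_a1) ne_n4_d1.symm ne_r_d1.symm ne_r_c2.symm ne_n3_c2.symm ne_n4_n3
  have ne_e2_a1 : e2 ≠ a1 := fun h => noC5 hg ad_c3_e2.symm ad_n4_c3.symm ad_r_n4.symm ad_r_n3 (by rw [h]; exact ad_n3_a1) ne_n4_e2.symm ne_r_e2.symm ne_r_c3.symm ne_n3_c3.symm ne_n4_n3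
  have ne_e1_a1 : e1 ≠ a1 := fun h => noC5 hg ad_c3_e1.symm ad_n4_c3.symm ad_r_n4.symm ad_r_n3 (by rw [h]; exact ad_n3_a1) ne_n4_e1.symm ne_r_e1.symm ne_r_c3.symm ne_n3_c3.symm ne_n4_n3
  have ne_lv_a1 : lv ≠ a1 := fun h => noC6 hg ad_e2_lv.symm ad_c3_e2.symm ad_n4_c3.symm ad_r_n4.symm ad_r_n3 (by rw [h]; exact ad_n3_a1) ne_c3_lv.symm ne_n4_lv.symm ne_r_lv.symm ne_n4_e2.symm ne_r_e2.symm ne_n3_e2.symm ne_r_c3.symm ne_n3_c3.symm ne_n4_n3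
  have nadj_d1_b1 : ¬ G.Adj d1 b1 := fun h => nadj_b1_d1 h.symm
  have nadj_e1_b1 : ¬ G.Adj e1 b1 := fun h => nadj_b1_e1 h.symm
  have nadj_lv_f1 : ¬ G.Adj lv f1 := fun h => nadj_f1_lv h.symm
  have nadj_lv_a1 : ¬ G.Adj lv a1 := fun h => nadj_a1_lv h.symm
  have nadj_n1_f1 : ¬ G.Adj n1 f1 := fun h => noC4 hg ad_r_n1.symm ad_r_n2 ad_n2_f1 h.symm ne_n2_n1.symm ne_r_f1
  have nadj_n1_a1 : ¬ G.Adj n1 a1 := fun h => noC4 hg ad_r_n1.symm ad_r_n3 ad_n3_a1 h.symm ne_n3_n1.symm ne_r_a1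
  have nadj_n1_b1 : ¬ G.Adj n1 b1 := fun h => noC5 hg ad_r_n1.symm ad_r_n3 ad_n3_a2 ad_a2_b1 h.symm ne_n3_n1.symm ne_n1_a2 ne_r_a2 ne_r_b1 ne_n3_b1
  have nadj_n1_c1 : ¬ G.Adj n1 c1 := fun h => noC4 hg ad_r_n1.symm ad_r_n4 ad_n4_c1 h.symm ne_n4_n1.symm ne_r_c1
  have nadj_n1_d1 : ¬ G.Adj n1 d1 := fun h => noC5 hg ad_r_n1.symm ad_r_n4 ad_n4_c2 ad_c2_d1 h.symm ne_n4_n1.symm ne_n1_c2 ne_r_c2 ne_r_d1 ne_n4_d1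
  have nadj_n1_e1 : ¬ G.Adj n1 e1 := fun h => noC5 hg ad_r_n1.symm ad_r_n4 ad_n4_c3 ad_c3_e1 h.symm ne_n4_n1.symm ne_n1_c3 ne_r_c3 ne_r_e1 ne_n4_e1
  have nadj_n1_lv : ¬ G.Adj n1 lv := fun h => noC6 hg ad_r_n1.symm ad_r_n4 ad_n4_c3 ad_c3_e2 ad_e2_lv h.symm ne_n4_n1.symm ne_n1_c3 ne_n1_e2 ne_r_c3 ne_r_e2 ne_r_lv ne_n4_e2 ne_n4_lv ne_c3_lv
  have nadj_f1_a1 : ¬ G.Adj f1 a1 := fun h => noC5 hg ad_n2_f1.symm ad_r_n2.symm ad_r_n3 ad_n3_a1 h.symm ne_r_f1.symm ne_n3_f1.symm ne_n3_n2.symm ne_n2_a1 ne_r_a1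
  have nadj_b1_f1 : ¬ G.Adj b1 f1 := fun h => noC6 hg ad_a2_b1.symm ad_n3_a2.symm ad_r_n3.symm ad_r_n2 ad_n2_f1 h.symm ne_n3_b1.symm ne_r_b1.symm ne_n2_b1.symm ne_r_a2.symm ne_n2_a2.symm ne_a2_f1 ne_n3_n2 ne_n3_f1 ne_r_f1
  have nadj_c1_f1 : ¬ G.Adj c1 f1 := fun h => noC5 hg ad_n4_c1.symm ad_r_n4.symm ad_r_n2 ad_n2_f1 h.symm ne_r_c1.symm ne_n2_c1.symm ne_n4_n2 ne_n4_f1 ne_r_f1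
  have nadj_d1_f1 : ¬ G.Adj d1 f1 := fun h => noC6 hg ad_c2_d1.symm ad_n4_c2.symm ad_r_n4.symm ad_r_n2 ad_n2_f1 h.symm ne_n4_d1.symm ne_r_d1.symm ne_n2_d1.symm ne_r_c2.symm ne_n2_c2.symm ne_c2_f1 ne_n4_n2 ne_n4_f1 ne_r_f1
  have nadj_e1_f1 : ¬ G.Adj e1 f1 := fun h => noC6 hg ad_c3_e1.symm ad_n4_c3.symm ad_r_n4.symm ad_r_n2 ad_n2_f1 h.symm ne_n4_e1.symm ne_r_e1.symm ne_n2_e1.symm ne_r_c3.symm ne_n2_c3.symm ne_c3_f1 ne_n4_n2 ne_n4_f1 ne_r_f1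
  -- nadj_lv_f1 from pick
  have nadj_b1_a1 : ¬ G.Adj b1 a1 := fun h => noC4 hg ad_a2_b1.symm ad_n3_a2.symm ad_n3_a1 h.symm ne_n3_b1.symm ne_a2_a1
  have nadj_c1_a1 : ¬ G.Adj c1 a1 := fun h => noC5 hg ad_n4_c1.symm ad_r_n4.symm ad_r_n3 ad_n3_a1 h.symm ne_r_c1.symm ne_n3_c1.symm ne_n4_n3 ne_n4_a1 ne_r_a1
  have nadj_d1_a1 : ¬ G.Adj d1 a1 := fun h => noC6 hg ad_c2_d1.symm ad_n4_c2.symm ad_r_n4.symm ad_r_n3 ad_n3_a1 h.symm ne_n4_d1.symm ne_r_d1.symm ne_n3_d1.symm ne_r_c2.symm ne_n3_c2.symm ne_c2_a1 ne_n4_n3 ne_n4_a1 ne_r_a1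
  have nadj_e1_a1 : ¬ G.Adj e1 a1 := fun h => noC6 hg ad_c3_e1.symm ad_n4_c3.symm ad_r_n4.symm ad_r_n3 ad_n3_a1 h.symm ne_n4_e1.symm ne_r_e1.symm ne_n3_e1.symm ne_r_c3.symm ne_n3_c3.symm ne_c3_a1 ne_n4_n3 ne_n4_a1 ne_r_a1
  -- nadj_lv_a1 from pick
  have nadj_c1_b1 : ¬ G.Adj c1 b1 := fun h => noC6 hg ad_n4_c1.symm ad_r_n4.symm ad_r_n3 ad_n3_a2 ad_a2_b1 h.symm ne_r_c1.symm ne_n3_c1.symm ne_a2_c1.symm ne_n4_n3 ne_n4_a2 ne_n4_b1 ne_r_a2 ne_r_b1 ne_n3_b1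
  -- nadj_d1_b1 from pick
  -- nadj_e1_b1 from pick
  -- nadj_b1_lv from pick
  have nadj_c1_d1 : ¬ G.Adj c1 d1 := fun h => noC4 hg ad_n4_c1.symm ad_n4_c2 ad_c2_d1 h.symm ne_c2_c1.symm ne_n4_d1
  have nadj_c1_e1 : ¬ G.Adj c1 e1 := fun h => noC4 hg ad_n4_c1.symm ad_n4_c3 ad_c3_e1 h.symm ne_c3_c1.symm ne_n4_e1
  have nadj_c1_lv : ¬ G.Adj c1 lv := fun h => noC5 hg ad_n4_c1.symm ad_n4_c3 ad_c3_e2 ad_e2_lv h.symm ne_c3_c1.symm ne_c1_e2 ne_n4_e2 ne_n4_lv ne_c3_lv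
  have nadj_d1_e1 : ¬ G.Adj d1 e1 := fun h => noC5 hg ad_c2_d1.symm ad_n4_c2.symm ad_n4_c3 ad_c3_e1 h.symm ne_n4_d1.symm ne_c3_d1.symm ne_c3_c2.symm ne_c2_e1 ne_n4_e1
  have nadj_d1_lv : ¬ G.Adj d1 lv := fun h => noC6 hg ad_c2_d1.symm ad_n4_c2.symm ad_n4_c3 ad_c3_e2 ad_e2_lv h.symm ne_n4_d1.symm ne_c3_d1.symm ne_d1_e2 ne_c3_c2.symm ne_c2_e2 ne_c2_lv ne_n4_e2 ne_n4_lv ne_c3_lv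
  have nadj_e1_lv : ¬ G.Adj e1 lv := fun h => noC4 hg ad_c3_e1.symm ad_c3_e2 ad_e2_lv h.symm ne_e2_e1.symm ne_c3_lv
  have nadj_n2_a2 : ¬ G.Adj n2 a2 := fun h => noC4 hg ad_r_n2.symm ad_r_n3 ad_n3_a2 h.symm ne_n3_n2.symm ne_r_a2
  have nadj_n2_c2 : ¬ G.Adj n2 c2 := fun h => noC4 hg ad_r_n2.symm ad_r_n4 ad_n4_c2 h.symm ne_n4_n2.symm ne_r_c2
  have nadj_n2_e2 : ¬ G.Adj n2 e2 := fun h => noC5 hg ad_r_n2.symm ad_r_n4 ad_n4_c3 ad_c3_e2 h.symm ne_n4_n2.symm ne_n2_c3 ne_r_c3 ne_r_e2 ne_n4_e2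
  have nadj_a2_c2 : ¬ G.Adj a2 c2 := fun h => noC5 hg ad_n3_a2.symm ad_r_n3.symm ad_r_n4 ad_n4_c2 h.symm ne_r_a2.symm ne_n4_a2.symm ne_n4_n3.symm ne_n3_c2 ne_r_c2
  have nadj_a2_e2 : ¬ G.Adj a2 e2 := fun h => noC6 hg ad_n3_a2.symm ad_r_n3.symm ad_r_n4 ad_n4_c3 ad_c3_e2 h.symm ne_r_a2.symm ne_n4_a2.symm ne_a2_c3 ne_n4_n3.symm ne_n3_c3 ne_n3_e2 ne_r_c3 ne_r_e2 ne_n4_e2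
  have nadj_c2_e2 : ¬ G.Adj c2 e2 := fun h => noC4 hg ad_n4_c2.symm ad_n4_c3 ad_c3_e2 h.symm ne_c3_c2.symm ne_n4_e2
  have nadj_n3_c3 : ¬ G.Adj n3 c3 := fun h => noC4 hg ad_r_n3.symm ad_r_n4 ad_n4_c3 h.symm ne_n4_n3.symm ne_r_c3
  -- the ordering
  have hNpos : 0 < Fintype.card V := Fintype.card_pos
  set ρ : V → ℕ := fun v =>
    if v = n1 ∨ v = f1 ∨ v = a1 ∨ v = b1 ∨ v = c1 ∨ v = d1 ∨ v = e1 ∨ v = lv then 1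
    else if v = n2 ∨ v = a2 ∨ v = c2 ∨ v = e2 then 2
    else if v = n3 ∨ v = c3 then 3
    else if v = n4 then 4
    else if v = r then 5 else 6 with hρdef
  set emb : V → ℕ := fun v => ρ v * Fintype.card V + (Fintype.equivFin V v : ℕ) with hembdef
  have hgdx : ∀ v : V, ((Fintype.equivFin V v : ℕ)) < Fintype.card V :=
    fun v => (Fintype.equivFin V v).isLt
  have hemb_lt : ∀ u v : V, ρ u < ρ v → emb u < emb v := by
    intro u v h
    have h1 := hgdx u
    have h2 := hgdx v
    simp only [hembdef]
    nlinarith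
  have hemb_le : ∀ u v : V, emb u < emb v → ρ u ≤ ρ v := by
    intro u v h
    by_contra hcon
    push_neg at hcon
    exact absurd (hemb_lt v u hcon) (by omega)
  have hemb_inj : ∀ u v : V, emb u = emb v → u = v := by
    intro u v h
    have h1 : ρ u = ρ v := by
      rcases lt_trichotomy (ρ u) (ρ v) with h' | h' | h'
      · exact absurd h (by have := hemb_lt u v h'; omega)
      · exact h'
      · exact absurd h (by have := hemb_lt v u h'; omega)
    have h2 : ((Fintype.equivFin V u : ℕ)) = ((Fintype.equivFin V v : ℕ)) := by
      simp only [hembdef] at h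
      rw [h1] at h
      omega
    exact (Fintype.equivFin V).injective (Fin.ext h2)
  have hρ_pos : ∀ u : V, 1 ≤ ρ u := by
    intro u
    simp only [hρdef]
    split_ifs <;> omega
  have hρ_mem1 : ∀ u : V, ρ u = 1 →
      (u = n1 ∨ u = f1 ∨ u = a1 ∨ u = b1 ∨ u = c1 ∨ u = d1 ∨ u = e1 ∨ u = lv) := by
    intro u h
    simp only [hρdef] at h
    split_ifs at h <;> first | assumption | omega
  have hρ_mem2 : ∀ u : V, ρ u = 2 → (u = n2 ∨ u = a2 ∨ u = c2 ∨ u = e2) := by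
    intro u h
    simp only [hρdef] at h
    split_ifs at h <;> first | assumption | omega
  have hρ_mem3 : ∀ u : V, ρ u = 3 → (u = n3 ∨ u = c3) := by
    intro u h
    simp only [hρdef] at h
    split_ifs at h <;> first | assumption | omega
  have hρ_mem4 : ∀ u : V, ρ u = 4 → u = n4 := by
    intro u h
    simp only [hρdef] at h
    split_ifs at h <;> first | assumption | omega
  have hρ_mem5 : ∀ u : V, ρ u = 5 → u = r := by
    intro u h
    simp only [hρdef] at h
    split_ifs at h <;> first | assumption | omega

  have hrho_n1 : ρ n1 = 1 := by simp only [hρdef]; exact if_pos (Or.inl trivial)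
  have hrho_f1 : ρ f1 = 1 := by simp only [hρdef]; exact if_pos (Or.inr (Or.inl trivial))
  have hrho_a1 : ρ a1 = 1 := by simp only [hρdef]; exact if_pos (Or.inr (Or.inr (Or.inl trivial)))
  have hrho_b1 : ρ b1 = 1 := by simp only [hρdef]; exact if_pos (Or.inr (Or.inr (Or.inr (Or.inl trivial))))
  have hrho_c1 : ρ c1 = 1 := by simp only [hρdef]; exact if_pos (Or.inr (Or.inr (Or.inr (Or.inr (Or.inl trivial)))))
  have hrho_d1 : ρ d1 = 1 := by simp only [hρdef]; exact if_pos (Or.inr (Or.inr (Or.inr (Or.inr (Or.inr (Or.inl trivial))))))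
  have hrho_e1 : ρ e1 = 1 := by simp only [hρdef]; exact if_pos (Or.inr (Or.inr (Or.inr (Or.inr (Or.inr (Or.inr (Or.inl trivial)))))))
  have hrho_lv : ρ lv = 1 := by simp only [hρdef]; exact if_pos (Or.inr (Or.inr (Or.inr (Or.inr (Or.inr (Or.inr (Or.inr (trivial))))))))
  have hrho_n2 : ρ n2 = 2 := by simp only [hρdef]; exact (if_neg (by push_neg; exact ⟨ne_n2_n1, ne_n2_f1, ne_n2_a1, ne_n2_b1, ne_n2_c1, ne_n2_d1, ne_n2_e1, ne_n2_lv⟩)).trans (if_pos (Or.inl trivial))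
  have hrho_a2 : ρ a2 = 2 := by simp only [hρdef]; exact (if_neg (by push_neg; exact ⟨ne_n1_a2.symm, ne_a2_f1, ne_a2_a1, ne_a2_b1, ne_a2_c1, ne_a2_d1, ne_a2_e1, ne_a2_lv⟩)).trans (if_pos (Or.inr (Or.inl trivial)))
  have hrho_c2 : ρ c2 = 2 := by simp only [hρdef]; exact (if_neg (by push_neg; exact ⟨ne_n1_c2.symm, ne_c2_f1, ne_c2_a1, ne_c2_b1, ne_c2_c1, ne_c2_d1, ne_c2_e1, ne_c2_lv⟩)).trans (if_pos (Or.inr (Or.inr (Or.inl trivial))))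
  have hrho_e2 : ρ e2 = 2 := by simp only [hρdef]; exact (if_neg (by push_neg; exact ⟨ne_n1_e2.symm, ne_e2_f1, ne_e2_a1, ne_e2_b1, ne_c1_e2.symm, ne_d1_e2.symm, ne_e2_e1, ne_e2_lv⟩)).trans (if_pos (Or.inr (Or.inr (Or.inr (trivial)))))
  have hrho_n3 : ρ n3 = 3 := by simp only [hρdef]; exact (if_neg (by push_neg; exact ⟨ne_n3_n1, ne_n3_f1, ne_n3_a1, ne_n3_b1, ne_n3_c1, ne_n3_d1, ne_n3_e1, ne_n3_lv⟩)).trans ((if_neg (by push_neg; exact ⟨ne_n3_n2, ne_n3_a2, ne_n3_c2, ne_n3_e2⟩)).trans (if_pos (Or.inl trivial)))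
  have hrho_c3 : ρ c3 = 3 := by simp only [hρdef]; exact (if_neg (by push_neg; exact ⟨ne_n1_c3.symm, ne_c3_f1, ne_c3_a1, ne_c3_b1, ne_c3_c1, ne_c3_d1, ne_c3_e1, ne_c3_lv⟩)).trans ((if_neg (by push_neg; exact ⟨ne_n2_c3.symm, ne_a2_c3.symm, ne_c3_c2, ne_c3_e2⟩)).trans (if_pos (Or.inr (trivial))))
  have hrho_n4 : ρ n4 = 4 := by simp only [hρdef]; exact (if_neg (by push_neg; exact ⟨ne_n4_n1, ne_n4_f1, ne_n4_a1, ne_n4_b1, ne_n4_c1, ne_n4_d1, ne_n4_e1, ne_n4_lv⟩)).trans ((if_neg (by push_neg; exact ⟨ne_n4_n2, ne_n4_a2, ne_n4_c2, ne_n4_e2⟩)).trans ((if_neg (by push_neg; exact ⟨ne_n4_n3, ne_n4_c3⟩)).trans (if_pos trivial)))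
  have hrho_r : ρ r = 5 := by simp only [hρdef]; exact (if_neg (by push_neg; exact ⟨ne_r_n1, ne_r_f1, ne_r_a1, ne_r_b1, ne_r_c1, ne_r_d1, ne_r_e1, ne_r_lv⟩)).trans ((if_neg (by push_neg; exact ⟨ne_r_n2, ne_r_a2, ne_r_c2, ne_r_e2⟩)).trans ((if_neg (by push_neg; exact ⟨ne_r_n3, ne_r_c3⟩)).trans ((if_neg ne_r_n4).trans (if_pos trivial))))
  have mono1 : ∀ x y, (x = n1 ∨ x = f1 ∨ x = a1 ∨ x = b1 ∨ x = c1 ∨ x = d1 ∨ x = e1 ∨ x = lv) → (y = n1 ∨ y = f1 ∨ y = a1 ∨ y = b1 ∨ y = c1 ∨ y = d1 ∨ y = e1 ∨ y = lv) → ¬ G.Adj x y := by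
    intro x y hx hy hadj
    rcases hx with rfl|rfl|rfl|rfl|rfl|rfl|rfl|rfl <;> rcases hy with rfl|rfl|rfl|rfl|rfl|rfl|rfl|rfl <;>
      first
      | exact G.loopless.irrefl _ hadj
      | exact nadj_n1_f1 hadj
      | exact nadj_n1_f1 hadj.symm
      | exact nadj_n1_a1 hadj
      | exact nadj_n1_a1 hadj.symm
      | exact nadj_n1_b1 hadj
      | exact nadj_n1_b1 hadj.symm
      | exact nadj_n1_c1 hadj
      | exact nadj_n1_c1 hadj.symm
      | exact nadj_n1_d1 hadj
      | exact nadj_n1_d1 hadj.symm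
      | exact nadj_n1_e1 hadj
      | exact nadj_n1_e1 hadj.symm
      | exact nadj_n1_lv hadj
      | exact nadj_n1_lv hadj.symm
      | exact nadj_f1_a1 hadj
      | exact nadj_f1_a1 hadj.symm
      | exact nadj_b1_f1 hadj
      | exact nadj_b1_f1 hadj.symm
      | exact nadj_c1_f1 hadj
      | exact nadj_c1_f1 hadj.symm
      | exact nadj_d1_f1 hadj
      | exact nadj_d1_f1 hadj.symm
      | exact nadj_e1_f1 hadj
      | exact nadj_e1_f1 hadj.symm
      | exact nadj_lv_f1 hadj
      | exact nadj_lv_f1 hadj.symm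
      | exact nadj_b1_a1 hadj
      | exact nadj_b1_a1 hadj.symm
      | exact nadj_c1_a1 hadj
      | exact nadj_c1_a1 hadj.symm
      | exact nadj_d1_a1 hadj
      | exact nadj_d1_a1 hadj.symm
      | exact nadj_e1_a1 hadj
      | exact nadj_e1_a1 hadj.symm
      | exact nadj_lv_a1 hadj
      | exact nadj_lv_a1 hadj.symm
      | exact nadj_c1_b1 hadj
      | exact nadj_c1_b1 hadj.symm
      | exact nadj_d1_b1 hadj
      | exact nadj_d1_b1 hadj.symm
      | exact nadj_e1_b1 hadj
      | exact nadj_e1_b1 hadj.symm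
      | exact nadj_b1_lv hadj
      | exact nadj_b1_lv hadj.symm
      | exact nadj_c1_d1 hadj
      | exact nadj_c1_d1 hadj.symm
      | exact nadj_c1_e1 hadj
      | exact nadj_c1_e1 hadj.symm
      | exact nadj_c1_lv hadj
      | exact nadj_c1_lv hadj.symm
      | exact nadj_d1_e1 hadj
      | exact nadj_d1_e1 hadj.symm
      | exact nadj_d1_lv hadj
      | exact nadj_d1_lv hadj.symm
      | exact nadj_e1_lv hadj
      | exact nadj_e1_lv hadj.symm
  have mono2 : ∀ x y, (x = n2 ∨ x = a2 ∨ x = c2 ∨ x = e2) → (y = n2 ∨ y = a2 ∨ y = c2 ∨ y = e2) → ¬ G.Adj x y := by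
    intro x y hx hy hadj
    rcases hx with rfl|rfl|rfl|rfl <;> rcases hy with rfl|rfl|rfl|rfl <;>
      first
      | exact G.loopless.irrefl _ hadj
      | exact nadj_n2_a2 hadj
      | exact nadj_n2_a2 hadj.symm
      | exact nadj_n2_c2 hadj
      | exact nadj_n2_c2 hadj.symm
      | exact nadj_n2_e2 hadj
      | exact nadj_n2_e2 hadj.symm
      | exact nadj_a2_c2 hadj
      | exact nadj_a2_c2 hadj.symm
      | exact nadj_a2_e2 hadj
      | exact nadj_a2_e2 hadj.symm
      | exact nadj_c2_e2 hadj
      | exact nadj_c2_e2 hadj.symm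
  have mono3 : ∀ x y, (x = n3 ∨ x = c3) → (y = n3 ∨ y = c3) → ¬ G.Adj x y := by
    intro x y hx hy hadj
    rcases hx with rfl|rfl <;> rcases hy with rfl|rfl <;>
      first
      | exact G.loopless.irrefl _ hadj
      | exact nadj_n3_c3 hadj
      | exact nadj_n3_c3 hadj.symm
  -- colors of the special vertices under the greedy coloring
  have key1 : ∀ v : V,
      (v = n1 ∨ v = f1 ∨ v = a1 ∨ v = b1 ∨ v = c1 ∨ v = d1 ∨ v = e1 ∨ v = lv) →
      greedy G emb v = 1 := by
    intro v hv
    have hρv : ρ v = 1 := by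
      rcases hv with rfl | rfl | rfl | rfl | rfl | rfl | rfl | rfl
      exacts [hrho_n1, hrho_f1, hrho_a1, hrho_b1, hrho_c1, hrho_d1, hrho_e1, hrho_lv]
    refine greedy_exact G emb (by norm_num) (fun j hj1 hj2 => absurd hj2 (by omega)) ?_
    intro u hadj hlt hu1
    have hle : ρ u ≤ 1 := hρv ▸ hemb_le u v hlt
    have heq : ρ u = 1 := le_antisymm hle (hρ_pos u)
    exact mono1 v u hv (hρ_mem1 u heq) hadj
  have key2 : ∀ v : V, (v = n2 ∨ v = a2 ∨ v = c2 ∨ v = e2) → greedy G emb v = 2 := by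
    intro v hv
    have hρv : ρ v = 2 := by
      rcases hv with rfl | rfl | rfl | rfl
      exacts [hrho_n2, hrho_a2, hrho_c2, hrho_e2]
    refine greedy_exact G emb (by norm_num) ?_ ?_
    · intro j hj1 hj2
      have hj : j = 1 := by omega
      subst hj
      rcases hv with rfl | rfl | rfl | rfl
      · exact ⟨f1, ad_n2_f1, hemb_lt _ _ (by rw [hrho_f1, hrho_n2]; norm_num),
          key1 f1 (Or.inr (Or.inl rfl))⟩
      · exact ⟨b1, ad_a2_b1, hemb_lt _ _ (by rw [hrho_b1, hrho_a2]; norm_num),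
          key1 b1 (Or.inr (Or.inr (Or.inr (Or.inl rfl))))⟩
      · exact ⟨d1, ad_c2_d1, hemb_lt _ _ (by rw [hrho_d1, hrho_c2]; norm_num),
          key1 d1 (Or.inr (Or.inr (Or.inr (Or.inr (Or.inr (Or.inl rfl))))))⟩
      · exact ⟨lv, ad_e2_lv, hemb_lt _ _ (by rw [hrho_lv, hrho_e2]; norm_num),
          key1 lv (Or.inr (Or.inr (Or.inr (Or.inr (Or.inr (Or.inr (Or.inr rfl)))))))⟩
    · intro u hadj hlt hu
      have hle : ρ u ≤ 2 := hρv ▸ hemb_le u v hlt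
      have h1 := hρ_pos u
      have : ρ u = 1 ∨ ρ u = 2 := by omega
      rcases this with h | h
      · rw [key1 u (hρ_mem1 u h)] at hu
        omega
      · exact mono2 v u hv (hρ_mem2 u h) hadj
  have key3 : ∀ v : V, (v = n3 ∨ v = c3) → greedy G emb v = 3 := by
    intro v hv
    have hρv : ρ v = 3 := by
      rcases hv with rfl | rfl
      exacts [hrho_n3, hrho_c3]
    refine greedy_exact G emb (by norm_num) ?_ ?_
    · intro j hj1 hj2
      have hj : j = 1 ∨ j = 2 := by omega
      rcases hv with rfl | rfl
      · rcases hj with rfl | rfl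
        · exact ⟨a1, ad_n3_a1, hemb_lt _ _ (by rw [hrho_a1, hrho_n3]; norm_num),
            key1 a1 (Or.inr (Or.inr (Or.inl rfl)))⟩
        · exact ⟨a2, ad_n3_a2, hemb_lt _ _ (by rw [hrho_a2, hrho_n3]; norm_num),
            key2 a2 (Or.inr (Or.inl rfl))⟩
      · rcases hj with rfl | rfl
        · exact ⟨e1, ad_c3_e1, hemb_lt _ _ (by rw [hrho_e1, hrho_c3]; norm_num),
            key1 e1 (Or.inr (Or.inr (Or.inr (Or.inr (Or.inr (Or.inr (Or.inl rfl)))))))⟩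
        · exact ⟨e2, ad_c3_e2, hemb_lt _ _ (by rw [hrho_e2, hrho_c3]; norm_num),
            key2 e2 (Or.inr (Or.inr (Or.inr rfl)))⟩
    · intro u hadj hlt hu
      have hle : ρ u ≤ 3 := hρv ▸ hemb_le u v hlt
      have h1 := hρ_pos u
      have : ρ u = 1 ∨ ρ u = 2 ∨ ρ u = 3 := by omega
      rcases this with h | h | h
      · rw [key1 u (hρ_mem1 u h)] at hu
        omega
      · rw [key2 u (hρ_mem2 u h)] at hu
        omega
      · exact mono3 v u hv (hρ_mem3 u h) hadj
  have key4 : greedy G emb n4 = 4 := by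
    refine greedy_exact G emb (by norm_num) ?_ ?_
    · intro j hj1 hj2
      have hj : j = 1 ∨ j = 2 ∨ j = 3 := by omega
      rcases hj with rfl | rfl | rfl
      · exact ⟨c1, ad_n4_c1, hemb_lt _ _ (by rw [hrho_c1, hrho_n4]; norm_num),
          key1 c1 (Or.inr (Or.inr (Or.inr (Or.inr (Or.inl rfl)))))⟩
      · exact ⟨c2, ad_n4_c2, hemb_lt _ _ (by rw [hrho_c2, hrho_n4]; norm_num),
          key2 c2 (Or.inr (Or.inr (Or.inl rfl)))⟩
      · exact ⟨c3, ad_n4_c3, hemb_lt _ _ (by rw [hrho_c3, hrho_n4]; norm_num),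
          key3 c3 (Or.inr rfl)⟩
    · intro u hadj hlt hu
      have hle : ρ u ≤ 4 := hrho_n4 ▸ hemb_le u n4 hlt
      have h1 := hρ_pos u
      have : ρ u = 1 ∨ ρ u = 2 ∨ ρ u = 3 ∨ ρ u = 4 := by omega
      rcases this with h | h | h | h
      · rw [key1 u (hρ_mem1 u h)] at hu
        omega
      · rw [key2 u (hρ_mem2 u h)] at hu
        omega
      · rw [key3 u (hρ_mem3 u h)] at hu
        omega
      · exact G.loopless.irrefl n4 ((hρ_mem4 u h) ▸ hadj)
  have key5 : greedy G emb r = 5 := by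
    refine greedy_exact G emb (by norm_num) ?_ ?_
    · intro j hj1 hj2
      have hj : j = 1 ∨ j = 2 ∨ j = 3 ∨ j = 4 := by omega
      rcases hj with rfl | rfl | rfl | rfl
      · exact ⟨n1, ad_r_n1, hemb_lt _ _ (by rw [hrho_n1, hrho_r]; norm_num),
          key1 n1 (Or.inl rfl)⟩
      · exact ⟨n2, ad_r_n2, hemb_lt _ _ (by rw [hrho_n2, hrho_r]; norm_num),
          key2 n2 (Or.inl rfl)⟩
      · exact ⟨n3, ad_r_n3, hemb_lt _ _ (by rw [hrho_n3, hrho_r]; norm_num),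
          key3 n3 (Or.inl rfl)⟩
      · exact ⟨n4, ad_r_n4, hemb_lt _ _ (by rw [hrho_n4, hrho_r]; norm_num), key4⟩
    · intro u hadj hlt hu
      have hle : ρ u ≤ 5 := hrho_r ▸ hemb_le u r hlt
      have h1 := hρ_pos u
      have : ρ u = 1 ∨ ρ u = 2 ∨ ρ u = 3 ∨ ρ u = 4 ∨ ρ u = 5 := by omega
      rcases this with h | h | h | h | h
      · rw [key1 u (hρ_mem1 u h)] at hu
        omega
      · rw [key2 u (hρ_mem2 u h)] at hu
        omega
      · rw [key3 u (hρ_mem3 u h)] at hu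
        omega
      · rw [hρ_mem4 u h, key4] at hu
        omega
      · exact G.loopless.irrefl r ((hρ_mem5 u h) ▸ hadj)
  -- assemble the Grundy 5-coloring
  have hcol : GrundyColorable G 5 := by
    refine ⟨greedy G emb, ⟨⟨fun v => greedy_pos G emb v, ?_, ?_⟩, ?_, ?_⟩⟩
    · intro v w hadj
      have hne : emb w ≠ emb v := fun h => (G.ne_of_adj hadj) (hemb_inj v w h.symm)
      exact fun h => greedy_proper G emb hadj hne h.symm
    · intro v j hj1 hj2
      exact greedy_down G emb hj1 hj2
    · intro v
      have := greedy_le_degree G emb v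
      rw [hcard v] at this
      omega
    · intro j hj1 hj5
      have : j = 1 ∨ j = 2 ∨ j = 3 ∨ j = 4 ∨ j = 5 := by omega
      rcases this with rfl | rfl | rfl | rfl | rfl
      exacts [⟨n1, key1 n1 (Or.inl rfl)⟩, ⟨n2, key2 n2 (Or.inl rfl)⟩,
        ⟨n3, key3 n3 (Or.inl rfl)⟩, ⟨n4, key4⟩, ⟨r, key5⟩]
  -- conclusion
  have hub : ∀ k ∈ {k | GrundyColorable G k}, k ≤ 5 :=
    fun k hk => grundyColorable_le_five G hreg hk
  have hgr : grundy G = sSup {k | GrundyColorable G k} := rfl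
  rw [hgr]
  exact le_antisymm (csSup_le ⟨5, hcol⟩ hub) (le_csSup ⟨5, fun k hk => hub k hk⟩ hcol)
end

section
/- Let r ≥ 2 and 0 ≤ k ≤ (r−2)/2. If G is an r-regular graph containing an induced complete bipartite subgraph K_{r−k, k+2} with parts A (|A| = r−k) and B (|B| = k+2), where moreover every edge of G between A and B is present (A and B fully joined), then in every Grundy coloring of G no vertex of this K_{r−k,k+2} receives color r+1. -/
variable {V : Type*}

lemma helper_no_big_color {V : Type*} [Fintype V] [DecidableEq V]
    (G : SimpleGraph V) [DecidableRel G.Adj] (r : ℕ)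
    (hreg : G.IsRegularOfDegree r)
    (X Y : Finset V) (hYne : Y.Nonempty)
    (hcard : r + 2 ≤ X.card + Y.card)
    (hjoin : ∀ x ∈ X, ∀ y ∈ Y, G.Adj x y)
    (c : V → ℕ) (hc : IsGrundyColoring G c)
    (v : V) (hv : v ∈ X) : c v ≠ r + 1 := by
  intro hcv
  obtain ⟨hpos, hproper, hwit⟩ := hc
  have hYN : Y ⊆ G.neighborFinset v := by
    intro y hy
    exact (G.mem_neighborFinset v y).2 (hjoin v hv y hy)
  have hN : (G.neighborFinset v).card = r := hreg v
  have hsub : Finset.Icc 1 r ⊆ (G.neighborFinset v).image c := by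
    intro j hj
    rw [Finset.mem_Icc] at hj
    obtain ⟨u, hu, hcu⟩ := hwit v j hj.1 (by omega)
    exact Finset.mem_image.2 ⟨u, (G.mem_neighborFinset v u).2 hu, hcu⟩
  have himg : ((G.neighborFinset v).image c).card = (G.neighborFinset v).card := by
    have h1 := Finset.card_image_le (s := G.neighborFinset v) (f := c)
    have h2 := Finset.card_le_card hsub
    rw [Nat.card_Icc] at h2
    omega
  have hinj : Set.InjOn c (G.neighborFinset v) :=
    Finset.injOn_of_card_image_eq himg
  obtain ⟨b, hbY, hbmax⟩ := Y.exists_max_image c hYne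
  have key : ∀ y : V, ∃ uu : V, y ∈ Y.erase b → (G.Adj b uu ∧ c uu = c y) := by
    intro y
    by_cases hy : y ∈ Y.erase b
    · have hyY := Finset.mem_of_mem_erase hy
      have hne : y ≠ b := Finset.ne_of_mem_erase hy
      have hlt : c y < c b := by
        refine lt_of_le_of_ne (hbmax y hyY) (fun h => hne ?_)
        exact hinj (hYN hyY) (hYN hbY) h
      obtain ⟨uu, h1, h2⟩ := hwit b (c y) (hpos y) hlt
      exact ⟨uu, fun _ => ⟨h1, h2⟩⟩
    · exact ⟨y, fun h => absurd h hy⟩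
  choose u hu using key
  have hXsub : X ⊆ G.neighborFinset b := by
    intro x hx
    exact (G.mem_neighborFinset b x).2 (hjoin x hx b hbY).symm
  have hcard2 : (Y.erase b).card ≤ (G.neighborFinset b \ X).card := by
    apply Finset.card_le_card_of_injOn u
    · intro y hy
      obtain ⟨hadj, hcy⟩ := hu y hy
      have hyY := Finset.mem_of_mem_erase hy
      rw [Finset.mem_coe, Finset.mem_sdiff]
      refine ⟨(G.mem_neighborFinset b (u y)).2 hadj, fun hX => ?_⟩
      exact hproper (u y) y (hjoin (u y) hX y hyY) (by rw [hcy])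
    · intro y hy y' hy' heq
      have h1 := (hu y hy).2
      have h2 := (hu y' hy').2
      apply hinj (hYN (Finset.mem_of_mem_erase hy)) (hYN (Finset.mem_of_mem_erase hy'))
      rw [← h1, ← h2, heq]
  have h3 : (G.neighborFinset b \ X).card = r - X.card := by
    rw [Finset.card_sdiff_of_subset hXsub, SimpleGraph.card_neighborFinset_eq_degree, hreg b]
  have h4 : X.card ≤ r := by
    have := Finset.card_le_card hXsub
    rwa [SimpleGraph.card_neighborFinset_eq_degree, hreg b] at this
  have h5 : (Y.erase b).card = Y.card - 1 := Finset.card_erase_of_mem hbY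
  have h6 : 1 ≤ Y.card := hYne.card_pos
  omega

theorem kkplus2_no_color_r_plus_one {V : Type*} [Fintype V] [DecidableEq V]
    (G : SimpleGraph V) [DecidableRel G.Adj] (r k : ℕ) (hr : 2 ≤ r)
    (hk : 2 * k + 2 ≤ r) (hreg : G.IsRegularOfDegree r)
    (A B : Finset V) (hdisj : Disjoint A B)
    (hA : A.card + k = r) (hB : B.card = k + 2)
    (hAind : ∀ a ∈ A, ∀ a' ∈ A, ¬ G.Adj a a')
    (hBind : ∀ b ∈ B, ∀ b' ∈ B, ¬ G.Adj b b')
    (hjoin : ∀ a ∈ A, ∀ b ∈ B, G.Adj a b)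
    (c : V → ℕ) (hc : IsGrundyColoring G c) :
    ∀ v ∈ A ∪ B, c v ≠ r + 1 := by
  intro v hv
  have hBne : B.Nonempty := Finset.card_pos.1 (by omega)
  have hAne : A.Nonempty := Finset.card_pos.1 (by omega)
  rcases Finset.mem_union.1 hv with hvA | hvB
  · exact helper_no_big_color G r hreg A B hBne (by omega) hjoin c hc v hvA
  · exact helper_no_big_color G r hreg B A hAne (by omega)
      (fun b hb a ha => (hjoin a ha b hb).symm) c hc v hvB
end

section
/- For all integers r ≥ 4 and 3 ≤ k ≤ r+1, there exist arbitrarily large connected r-regular graphs G with Γ(G) = k. -/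
variable {V : Type*}

namespace GRaux

/-- part of slot `s` -/
def pt (k s : ℕ) : ℕ := min s (k - 2)

/-- part `j` is linked across the pair `(t, t+1)` -/
def lk (j t : ℕ) : Prop := (j = 0 ∧ t % 2 = 0) ∨ (j ≠ 0 ∧ t % 2 = 1)

instance : ∀ j t, Decidable (lk j t) := fun j t => by unfold lk; infer_instance

/-- `u` is the cyclic successor value of `t` mod `M` -/
def sc (M t u : ℕ) : Prop := u = t + 1 ∨ (t = M - 1 ∧ u = 0)

instance : ∀ M t u, Decidable (sc M t u) := fun M t u => by unfold sc; infer_instance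

def adjP (k M r : ℕ) (x y : Fin M × Fin r) : Prop :=
  (x.1 = y.1 ∧ pt k x.2.val ≠ pt k y.2.val) ∨
  (x.1 ≠ y.1 ∧ pt k x.2.val = pt k y.2.val ∧
    ((sc M x.1.val y.1.val ∧ lk (pt k x.2.val) x.1.val) ∨
     (sc M y.1.val x.1.val ∧ lk (pt k x.2.val) y.1.val)))

def Gr (k M r : ℕ) : SimpleGraph (Fin M × Fin r) where
  Adj := adjP k M r
  symm := by
    refine ⟨?_⟩
    rintro x y (⟨h1, h2⟩ | ⟨hne, he, hor⟩)
    · exact Or.inl ⟨h1.symm, Ne.symm h2⟩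
    · refine Or.inr ⟨hne.symm, he.symm, ?_⟩
      rw [← he]; exact Or.symm hor
  loopless := by
    refine ⟨?_⟩
    rintro x (⟨_, h2⟩ | ⟨hne, _⟩)
    · exact h2 rfl
    · exact hne rfl

lemma gr_adj (k M r : ℕ) (x y : Fin M × Fin r) : (Gr k M r).Adj x y ↔ adjP k M r x y := Iff.rfl

instance (k M r : ℕ) : DecidableRel (Gr k M r).Adj := fun x y => by
  change Decidable (adjP k M r x y); unfold adjP; infer_instance


def colA (k j : ℕ) : ℕ := if j = 0 then k - 1 else j
def colB (j : ℕ) : ℕ := j + 1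
def colD (k j : ℕ) : ℕ :=
  if k = 3 then j + 1 else if j = 0 then k - 1 else if j = k - 2 then 1 else j + 1

/-- the coloring used on copy `t` -/
def cc (k t j : ℕ) : ℕ :=
  if t = 2 ∨ t = 3 then colD k j else if t = 1 ∨ t % 2 = 0 then colA k j else colB j

lemma ccD {t : ℕ} (h : t = 2 ∨ t = 3) (k j : ℕ) : cc k t j = colD k j := by
  unfold cc; rw [if_pos h]

lemma ccA {t : ℕ} (h : (t = 1 ∨ t % 2 = 0) ∧ t ≠ 2) (k j : ℕ) : cc k t j = colA k j := by
  unfold cc; rw [if_neg (by omega), if_pos h.1]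

lemma ccB {t : ℕ} (h : t % 2 = 1 ∧ t ≠ 1 ∧ t ≠ 3) (k j : ℕ) : cc k t j = colB j := by
  unfold cc; rw [if_neg (by omega), if_neg (by omega)]

lemma cc_bounds {k j : ℕ} (hk : 3 ≤ k) (hj : j ≤ k - 2) (t : ℕ) :
    1 ≤ cc k t j ∧ cc k t j ≤ k - 1 := by
  unfold cc colA colB colD; split_ifs <;> omega

lemma cc_inj {k j₁ j₂ : ℕ} (hk : 3 ≤ k) (h1 : j₁ ≤ k - 2) (h2 : j₂ ≤ k - 2)
    (hne : j₁ ≠ j₂) (t : ℕ) : cc k t j₁ ≠ cc k t j₂ := by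
  unfold cc colA colB colD; split_ifs <;> omega

lemma colD_ne_colA {k j : ℕ} (hk : 3 ≤ k) (h1 : 1 ≤ j) (h2 : j ≤ k - 2) :
    colD k j ≠ colA k j := by
  unfold colD colA; split_ifs <;> omega

lemma colD_le {k j : ℕ} (hk : 3 ≤ k) (hk3 : k ≠ 3) (h1 : 1 ≤ j) (h2 : j ≤ k - 2) :
    colD k j ≤ k - 2 := by
  unfold colD; split_ifs <;> omega

lemma colA_eval {k j : ℕ} (h : j ≠ 0) : colA k j = j := if_neg h

lemma colA_zero (k : ℕ) : colA k 0 = k - 1 := if_pos rfl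

lemma invD {k i : ℕ} (hk : 3 ≤ k) (h1 : 1 ≤ i) (h2 : i ≤ k - 1) :
    ∃ j, j ≤ k - 2 ∧ colD k j = i := by
  refine ⟨if k = 3 then i - 1 else if i = k - 1 then 0 else if i = 1 then k - 2 else i - 1, ?_, ?_⟩
  · split_ifs <;> omega
  · unfold colD; split_ifs <;> omega

lemma invD' {k i : ℕ} (hk : 3 ≤ k) (h1 : 1 ≤ i) (h2 : i ≤ k - 1) (h3 : i ≠ colD k 0) :
    ∃ j, 1 ≤ j ∧ j ≤ k - 2 ∧ colD k j = i := by
  unfold colD at h3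
  refine ⟨if k = 3 then 1 else if i = 1 then k - 2 else i - 1, ?_, ?_, ?_⟩
  · split_ifs <;> omega
  · split_ifs <;> omega
  · unfold colD; split_ifs at h3 ⊢ <;> omega

lemma pt_le {k : ℕ} (s : ℕ) : pt k s ≤ k - 2 := min_le_right _ _

lemma pt_zero_iff {k s : ℕ} (hk : 3 ≤ k) : pt k s = 0 ↔ s = 0 := by
  unfold pt; omega

lemma pt_eval {k j : ℕ} (h : j ≤ k - 2) : pt k j = j := min_eq_left h


/-- the Grundy coloring -/
def gc (k : ℕ) {M r : ℕ} (x : Fin M × Fin r) : ℕ :=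
  if x.2.val = 0 ∧ (x.1.val = 0 ∨ x.1.val = 2) then k
  else cc k x.1.val (pt k x.2.val)

section Main

variable {k M r : ℕ} (hk : 3 ≤ k) (hkr : k ≤ r + 1) (hr : 4 ≤ r) (hM4 : 4 ≤ M) (hM2 : M % 2 = 0)

include hk hkr hr hM4 hM2 in
lemma slot_lt {j : ℕ} (hj : j ≤ k - 2) : j < r := by omega

/-- slot for part `j` -/
def slotF {j : ℕ} (h : j < r) : Fin r := ⟨j, h⟩

include hk hkr hr hM4 hM2 in
lemma gc_pos (x : Fin M × Fin r) : 1 ≤ gc k x ∧ gc k x ≤ k := by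
  unfold gc
  split_ifs
  · omega
  · have := cc_bounds hk (pt_le (k := k) x.2.val) x.1.val
    omega

lemma gc_normal {x : Fin M × Fin r} (h : ¬(x.2.val = 0 ∧ (x.1.val = 0 ∨ x.1.val = 2))) :
    gc k x = cc k x.1.val (pt k x.2.val) := if_neg h

lemma gc_special {x : Fin M × Fin r} (h : x.2.val = 0 ∧ (x.1.val = 0 ∨ x.1.val = 2)) :
    gc k x = k := if_pos h

include hk hkr hr hM4 hM2 in
lemma cross_ne (x y : Fin M × Fin r) (hsc : sc M x.1.val y.1.val)
    (hlk : lk (pt k x.2.val) x.1.val) (hpt : pt k x.2.val = pt k y.2.val) :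
    gc k x ≠ gc k y := by
  have ht : x.1.val < M := x.1.isLt
  have hu : y.1.val < M := y.1.isLt
  rcases hsc with hsc | ⟨hsc1, hsc2⟩
  all_goals {
  by_cases hj : pt k x.2.val = 0
  · -- part 0
    have hx2 : x.2.val = 0 := (pt_zero_iff hk).1 hj
    have hjy : pt k y.2.val = 0 := by rw [← hpt]; exact hj
    have hy2 : y.2.val = 0 := (pt_zero_iff hk).1 hjy
    have hpar : x.1.val % 2 = 0 := by unfold lk at hlk; omega
    rcases (by omega : x.1.val = 0 ∨ x.1.val = 2 ∨ (x.1.val % 2 = 0 ∧ x.1.val ≠ 0 ∧ x.1.val ≠ 2)) with h0 | h0 | h0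
    · rw [gc_special ⟨hx2, Or.inl h0⟩]
      have hu1 : y.1.val = 1 := by omega
      rw [gc_normal (by omega), hu1, hjy, ccA (by omega), colA_zero]
      omega
    · rw [gc_special ⟨hx2, Or.inr h0⟩]
      have := cc_bounds hk (pt_le (k := k) y.2.val) y.1.val
      rw [gc_normal (by omega)]
      omega
    · have huv : y.1.val % 2 = 1 ∧ y.1.val ≠ 1 ∧ y.1.val ≠ 3 := by omega
      rw [gc_normal (by omega), gc_normal (by omega), hj, hjy,
        ccA (by omega), ccB huv, colA_zero]
      unfold colB; omega
  · -- part ≥ 1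
    have hj1 : 1 ≤ pt k x.2.val := by omega
    have hx2 : x.2.val ≠ 0 := fun h => hj (by rw [h]; unfold pt; omega)
    have hy2 : y.2.val ≠ 0 := fun h => (hpt ▸ hj) (by rw [h]; unfold pt; omega)
    have hpar : x.1.val % 2 = 1 := by unfold lk at hlk; omega
    rw [gc_normal (by omega), gc_normal (by omega), ← hpt]
    rcases (by omega : x.1.val = 1 ∨ x.1.val = 3 ∨ (x.1.val % 2 = 1 ∧ x.1.val ≠ 1 ∧ x.1.val ≠ 3)) with h0 | h0 | h0
    · rw [h0, ccA (by omega), (by omega : y.1.val = 2), ccD (by omega)]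
      exact (colD_ne_colA hk hj1 (pt_le _)).symm
    · rw [h0, ccD (by omega), ccA (k := k) (t := y.1.val) (by omega)]
      exact colD_ne_colA hk hj1 (pt_le _)
    · rw [ccB h0, ccA (k := k) (t := y.1.val) (by omega), colA_eval (by omega)]
      unfold colB; omega
  }

include hk hkr hr hM4 hM2 in
lemma gc_proper : ∀ x y : Fin M × Fin r, (Gr k M r).Adj x y → gc k x ≠ gc k y := by
  intro x y h
  rcases h with ⟨h1, h2⟩ | ⟨hne, he, hor⟩
  · by_cases hx : x.2.val = 0 ∧ (x.1.val = 0 ∨ x.1.val = 2)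
    · by_cases hy : y.2.val = 0 ∧ (y.1.val = 0 ∨ y.1.val = 2)
      · exact absurd (by rw [hx.1, hy.1]) h2
      · have := cc_bounds hk (pt_le (k := k) y.2.val) y.1.val
        rw [gc_special hx, gc_normal hy]; omega
    · by_cases hy : y.2.val = 0 ∧ (y.1.val = 0 ∨ y.1.val = 2)
      · have := cc_bounds hk (pt_le (k := k) x.2.val) x.1.val
        rw [gc_special hy, gc_normal hx]; omega
      · rw [gc_normal hx, gc_normal hy, ← h1]
        exact cc_inj hk (pt_le _) (pt_le _) h2 _
  · rcases hor with ⟨hsc, hlk⟩ | ⟨hsc, hlk⟩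
    · exact cross_ne hk hkr hr hM4 hM2 x y hsc hlk he
    · rw [he] at hlk
      exact (cross_ne hk hkr hr hM4 hM2 y x hsc hlk he.symm).symm

lemma adj_cross {x y : Fin M × Fin r} (hne : x.1.val ≠ y.1.val)
    (hpt : pt k x.2.val = pt k y.2.val)
    (h : (sc M x.1.val y.1.val ∧ lk (pt k x.2.val) x.1.val) ∨
         (sc M y.1.val x.1.val ∧ lk (pt k x.2.val) y.1.val)) : (Gr k M r).Adj x y :=
  Or.inr ⟨fun hh => hne (congrArg Fin.val hh), hpt, h⟩

include hk hkr hr hM4 hM2 in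
lemma within (tF : Fin M) (aF : Fin r) {j' : ℕ} (hj' : j' ≤ k - 2)
    (hne : j' ≠ pt k aF.val) (hns : ¬(j' = 0 ∧ (tF.val = 0 ∨ tF.val = 2))) :
    (Gr k M r).Adj (tF, aF) (tF, ⟨j', slot_lt hk hkr hr hM4 hM2 hj'⟩) ∧
      gc k ((tF, (⟨j', slot_lt hk hkr hr hM4 hM2 hj'⟩ : Fin r)) : Fin M × Fin r) = cc k tF.val j' := by
  constructor
  · exact Or.inl ⟨rfl, by simpa [pt_eval hj'] using (Ne.symm hne)⟩
  · rw [gc_normal (by simpa [pt_eval hj'] using hns)]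
    simp [pt_eval hj']

include hk hkr hr hM4 hM2 in
lemma gc_needs : ∀ v : Fin M × Fin r, ∀ i, 1 ≤ i → i < gc k v →
    ∃ u, (Gr k M r).Adj v u ∧ gc k u = i := by
  rintro ⟨tF, aF⟩ i hi1 hi2
  have ht : tF.val < M := tF.isLt
  by_cases hsp : aF.val = 0 ∧ (tF.val = 0 ∨ tF.val = 2)
  · rw [gc_special hsp] at hi2
    have hja : pt k aF.val = 0 := by rw [hsp.1]; unfold pt; omega
    rcases hsp.2 with h0 | h0
    · by_cases htop : i = k - 1
      · refine ⟨(⟨1, by omega⟩, ⟨0, by omega⟩), adj_cross ?_ ?_ (Or.inl ⟨?_, ?_⟩), ?_⟩ <;>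
          dsimp -failIfUnchanged only
        · omega
        · rw [hja]; unfold pt; omega
        · unfold sc; omega
        · rw [hja]; unfold lk; omega
        · show gc k ((⟨1, by omega⟩ : Fin M), (⟨0, by omega⟩ : Fin r)) = i
          rw [gc_normal (by dsimp only; omega)]
          dsimp only
          rw [(by unfold pt; omega : pt k 0 = 0), ccA (by omega), colA_zero]
          omega
      · obtain ⟨hadj, hval⟩ := within hk hkr hr hM4 hM2 tF aF (j' := i) (by omega)
          (by omega) (by omega)
        exact ⟨_, hadj, by rw [hval, h0, ccA (by omega), colA_eval (by omega)]⟩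
    · by_cases hD0 : i = colD k 0
      · refine ⟨(⟨3, by omega⟩, ⟨0, by omega⟩), adj_cross ?_ ?_ (Or.inl ⟨?_, ?_⟩), ?_⟩ <;>
          dsimp -failIfUnchanged only
        · omega
        · rw [hja]; unfold pt; omega
        · unfold sc; omega
        · rw [hja]; unfold lk; omega
        · show gc k ((⟨3, by omega⟩ : Fin M), (⟨0, by omega⟩ : Fin r)) = i
          rw [gc_normal (by dsimp only; omega)]
          dsimp only
          rw [(by unfold pt; omega : pt k 0 = 0), ccD (by omega)]
          omega
      · obtain ⟨j', hj'1, hj'2, hj'3⟩ := invD' hk hi1 (by omega) hD0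
        obtain ⟨hadj, hval⟩ := within hk hkr hr hM4 hM2 tF aF hj'2 (by omega) (by omega)
        exact ⟨_, hadj, by rw [hval, h0, ccD (by omega), hj'3]⟩
  · rw [gc_normal hsp] at hi2
    dsimp only at hi2
    have hjle : pt k aF.val ≤ k - 2 := pt_le _
    by_cases hD : tF.val = 2 ∨ tF.val = 3
    · rw [ccD hD] at hi2
      have hbd : colD k (pt k aF.val) ≤ k - 1 := by
        have h := cc_bounds hk hjle 2
        rw [ccD (by omega)] at h
        exact h.2
      by_cases ht3 : tF.val = 3
      · obtain ⟨j', hj'le, hj'val⟩ := invD hk hi1 (by omega)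
        obtain ⟨hadj, hval⟩ := within hk hkr hr hM4 hM2 tF aF hj'le
          (fun h => by rw [h] at hj'val; omega) (by omega)
        exact ⟨_, hadj, by rw [hval, ccD (by omega), hj'val]⟩
      · have ht2 : tF.val = 2 := by omega
        have ha0 : aF.val ≠ 0 := fun h => hsp ⟨h, Or.inr ht2⟩
        have hj1 : 1 ≤ pt k aF.val := by unfold pt; omega
        by_cases hD0 : i = colD k 0
        · have hk3 : k = 3 := by
            by_contra hk3
            have h1 := colD_le hk hk3 hj1 hjle
            have h2 : colD k 0 = k - 1 := by unfold colD; rw [if_neg hk3, if_pos rfl]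
            omega
          have hjv : pt k aF.val = 1 := by omega
          have hD0' : i = 1 := by rw [hD0, hk3]; rfl
          refine ⟨(⟨1, by omega⟩, aF), adj_cross ?_ rfl (Or.inr ⟨?_, ?_⟩), ?_⟩ <;>
            dsimp -failIfUnchanged only
          · omega
          · unfold sc; omega
          · rw [hjv]; unfold lk; omega
          · show gc k ((⟨1, by omega⟩ : Fin M), aF) = i
            rw [gc_normal (by dsimp only; omega)]
            dsimp only
            rw [ccA (by omega), colA_eval (by omega)]
            omega
        · obtain ⟨j', hj'1, hj'2, hj'3⟩ := invD' hk hi1 (by omega) hD0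
          obtain ⟨hadj, hval⟩ := within hk hkr hr hM4 hM2 tF aF hj'2
            (fun h => by rw [h] at hj'3; omega) (by omega)
          exact ⟨_, hadj, by rw [hval, ht2, ccD (by omega), hj'3]⟩
    · by_cases hAB : tF.val = 1 ∨ tF.val % 2 = 0
      · rw [ccA ⟨hAB, by omega⟩] at hi2
        have hile : i ≤ k - 2 := by
          by_cases hj0 : pt k aF.val = 0
          · rw [hj0, colA_zero] at hi2; omega
          · rw [colA_eval hj0] at hi2; omega
        have hij : i ≠ pt k aF.val := by
          by_cases hj0 : pt k aF.val = 0
          · omega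
          · rw [colA_eval hj0] at hi2; omega
        obtain ⟨hadj, hval⟩ := within hk hkr hr hM4 hM2 tF aF hile hij (by omega)
        exact ⟨_, hadj, by rw [hval, ccA ⟨hAB, by omega⟩, colA_eval (by omega)]⟩
      · rw [ccB (by omega)] at hi2
        unfold colB at hi2
        obtain ⟨hadj, hval⟩ := within hk hkr hr hM4 hM2 tF aF (j' := i - 1) (by omega)
          (by omega) (by omega)
        refine ⟨_, hadj, by rw [hval, ccB (by omega)]; unfold colB; omega⟩

/-- the unique adjacent copy for part `j` at copy `t` -/
def tstar (M t j : ℕ) : ℕ :=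
  if lk j t then (if t = M - 1 then 0 else t + 1) else (if t = 0 then M - 1 else t - 1)

lemma tstar_lt {t : ℕ} (hM4 : 4 ≤ M) (ht : t < M) (j : ℕ) : tstar M t j < M := by
  unfold tstar; split_ifs <;> omega

lemma tstar_ne {t : ℕ} (hM4 : 4 ≤ M) (ht : t < M) (j : ℕ) : tstar M t j ≠ t := by
  unfold tstar; split_ifs <;> omega

include hk hkr hr hM4 hM2 in
lemma adj_classify (v z : Fin M × Fin r) :
    (Gr k M r).Adj v z ↔ ((z.1 = v.1 ∧ pt k z.2.val ≠ pt k v.2.val) ∨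
      (z.1.val = tstar M v.1.val (pt k v.2.val) ∧ pt k z.2.val = pt k v.2.val)) := by
  have hv : v.1.val < M := v.1.isLt
  have hz : z.1.val < M := z.1.isLt
  constructor
  · rintro (⟨h1, h2⟩ | ⟨hne, he, hor⟩)
    · exact Or.inl ⟨h1.symm, Ne.symm h2⟩
    · refine Or.inr ⟨?_, he.symm⟩
      rcases hor with ⟨hsc, hlk⟩ | ⟨hsc, hlk⟩
      · unfold tstar
        rw [if_pos hlk]
        unfold sc at hsc; split_ifs <;> omega
      · have hnl : ¬ lk (pt k v.2.val) v.1.val := by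
          unfold lk at hlk ⊢; unfold sc at hsc; omega
        unfold tstar
        rw [if_neg hnl]
        unfold sc at hsc; split_ifs <;> omega
  · rintro (⟨h1, h2⟩ | ⟨h1, h2⟩)
    · exact Or.inl ⟨h1.symm, Ne.symm h2⟩
    · refine Or.inr ⟨?_, h2.symm, ?_⟩
      · intro hh
        exact tstar_ne hM4 hv (pt k v.2.val) (by rw [← h1, hh])
      · by_cases hlk : lk (pt k v.2.val) v.1.val
        · refine Or.inl ⟨?_, hlk⟩
          unfold tstar at h1; rw [if_pos hlk] at h1
          unfold sc; split_ifs at h1 <;> omega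
        · refine Or.inr ⟨?_, ?_⟩
          · unfold tstar at h1; rw [if_neg hlk] at h1
            unfold sc; split_ifs at h1 <;> omega
          · unfold tstar at h1; rw [if_neg hlk] at h1
            unfold lk at hlk ⊢
            split_ifs at h1 <;> omega

include hk hkr hr hM4 hM2 in
lemma gr_degree (v : Fin M × Fin r) : (Gr k M r).degree v = r := by
  classical
  have hts : tstar M v.1.val (pt k v.2.val) < M := tstar_lt hM4 v.1.isLt _
  have key : (Gr k M r).neighborFinset v =
      ((Finset.univ.filter fun b : Fin r => ¬ pt k b.val = pt k v.2.val).image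
        fun b => (v.1, b)) ∪
      ((Finset.univ.filter fun b : Fin r => pt k b.val = pt k v.2.val).image
        fun b => ((⟨tstar M v.1.val (pt k v.2.val), hts⟩ : Fin M), b)) := by
    ext ⟨z1, z2⟩
    rw [SimpleGraph.mem_neighborFinset, adj_classify hk hkr hr hM4 hM2]
    dsimp only
    simp only [Finset.mem_union, Finset.mem_image, Finset.mem_filter, Finset.mem_univ,
      true_and, Prod.mk.injEq]
    constructor
    · rintro (⟨h1, h2⟩ | ⟨h1, h2⟩)
      · exact Or.inl ⟨z2, h2, h1.symm, rfl⟩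
      · exact Or.inr ⟨z2, h2, Fin.ext h1.symm, rfl⟩
    · rintro (⟨b, hb, h1, h2⟩ | ⟨b, hb, h1, h2⟩)
      · exact Or.inl ⟨h1.symm, by rw [← h2]; exact hb⟩
      · exact Or.inr ⟨by rw [← h1], by rw [← h2]; exact hb⟩
  have hdisj : Disjoint
      ((Finset.univ.filter fun b : Fin r => ¬ pt k b.val = pt k v.2.val).image
        fun b => (v.1, b))
      ((Finset.univ.filter fun b : Fin r => pt k b.val = pt k v.2.val).image
        fun b => ((⟨tstar M v.1.val (pt k v.2.val), hts⟩ : Fin M), b)) := by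
    rw [Finset.disjoint_left]
    rintro ⟨z1, z2⟩ hz1 hz2
    simp only [Finset.mem_image, Finset.mem_filter, Finset.mem_univ, true_and,
      Prod.mk.injEq] at hz1 hz2
    obtain ⟨b, _, hb1, _⟩ := hz1
    obtain ⟨b', _, hb1', _⟩ := hz2
    exact tstar_ne hM4 v.1.isLt (pt k v.2.val)
      (congrArg Fin.val (hb1'.trans hb1.symm))
  show ((Gr k M r).neighborFinset v).card = r
  rw [key, Finset.card_union_of_disjoint hdisj,
    Finset.card_image_of_injective _ (Prod.mk_right_injective v.1),
    Finset.card_image_of_injective _ (Prod.mk_right_injective _), add_comm,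
    Finset.card_filter_add_card_filter_not
      (fun b : Fin r => pt k b.val = pt k v.2.val),
    Finset.card_univ, Fintype.card_fin]

include hk hkr hr hM4 hM2 in
lemma reach_same (tF : Fin M) (aF bF : Fin r) :
    (Gr k M r).Reachable (tF, aF) (tF, bF) := by
  by_cases h : pt k aF.val = pt k bF.val
  · by_cases hab : aF = bF
    · rw [hab]
    · obtain ⟨m, hmr, hne'⟩ : ∃ m : ℕ, m < r ∧ pt k m ≠ pt k aF.val := by
        by_cases hc : aF.val = 0
        · exact ⟨1, by omega, by unfold pt; omega⟩
        · exact ⟨0, by omega, by unfold pt; omega⟩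
      set mid : Fin r := ⟨m, hmr⟩ with hmid
      have hne : pt k mid.val ≠ pt k aF.val := hne'
      have a1 : (Gr k M r).Adj (tF, aF) (tF, mid) := Or.inl ⟨rfl, Ne.symm hne⟩
      have a2 : (Gr k M r).Adj (tF, mid) (tF, bF) := Or.inl ⟨rfl, by rw [← h]; exact hne⟩
      exact a1.reachable.trans a2.reachable
  · exact (SimpleGraph.Adj.reachable (Or.inl ⟨rfl, h⟩))

include hk hkr hr hM4 hM2 in
lemma reach_zero : ∀ (t : ℕ) (htm : t < M) (aF : Fin r),
    (Gr k M r).Reachable (⟨t, htm⟩, aF) ((⟨0, by omega⟩ : Fin M), (⟨0, by omega⟩ : Fin r)) := by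
  intro t
  induction t with
  | zero => exact fun htm aF => reach_same hk hkr hr hM4 hM2 _ aF _
  | succ n ih =>
    intro htm aF
    have hj0r : (if n % 2 = 0 then 0 else 1) < r := by split_ifs <;> omega
    have hedge : (Gr k M r).Adj (⟨n + 1, htm⟩, ⟨if n % 2 = 0 then 0 else 1, hj0r⟩)
        (⟨n, by omega⟩, ⟨if n % 2 = 0 then 0 else 1, hj0r⟩) := by
      refine Or.inr ⟨?_, rfl, Or.inr ⟨Or.inl rfl, ?_⟩⟩
      · intro hh
        have := congrArg Fin.val hh
        dsimp only at this
        omega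
      · show lk (pt k (if n % 2 = 0 then 0 else 1)) n
        unfold pt lk
        split_ifs <;> omega
    exact (reach_same hk hkr hr hM4 hM2 _ aF _).trans
      (hedge.reachable.trans (ih (by omega) _))

include hk hkr hr hM4 hM2 in
lemma gr_connected : (Gr k M r).Connected := by
  rw [SimpleGraph.connected_iff]
  refine ⟨fun x y => ?_, ⟨((⟨0, by omega⟩ : Fin M), (⟨0, by omega⟩ : Fin r))⟩⟩
  obtain ⟨⟨t, htm⟩, aF⟩ := x
  obtain ⟨⟨s, hsm⟩, bF⟩ := y
  exact (reach_zero hk hkr hr hM4 hM2 t htm aF).trans (reach_zero hk hkr hr hM4 hM2 s hsm bF).symm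

lemma adj_congr (u₁ u₂ z : Fin M × Fin r) (h1 : u₁.1 = u₂.1)
    (h2 : pt k u₁.2.val = pt k u₂.2.val) :
    (Gr k M r).Adj u₁ z ↔ (Gr k M r).Adj u₂ z := by
  show adjP k M r u₁ z ↔ adjP k M r u₂ z
  unfold adjP
  rw [h1, h2]

lemma twin_color (c : Fin M × Fin r → ℕ)
    (hpos : ∀ v, 1 ≤ c v)
    (hprop : ∀ v w, (Gr k M r).Adj v w → c v ≠ c w)
    (hneed : ∀ v j, 1 ≤ j → j < c v → ∃ u, (Gr k M r).Adj v u ∧ c u = j)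
    (u₁ u₂ : Fin M × Fin r) (h1 : u₁.1 = u₂.1)
    (h2 : pt k u₁.2.val = pt k u₂.2.val) : c u₁ = c u₂ := by
  rcases lt_trichotomy (c u₁) (c u₂) with h | h | h
  · obtain ⟨z, hz, hcz⟩ := hneed u₂ (c u₁) (hpos u₁) h
    exact absurd hcz.symm (hprop u₁ z ((adj_congr u₁ u₂ z h1 h2).mpr hz))
  · exact h
  · obtain ⟨z, hz, hcz⟩ := hneed u₁ (c u₂) (hpos u₂) h
    exact absurd hcz.symm (hprop u₂ z ((adj_congr u₁ u₂ z h1 h2).mp hz))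

include hk hkr hr hM4 hM2 in
lemma gr_upper (c : Fin M × Fin r → ℕ)
    (hpos : ∀ v, 1 ≤ c v)
    (hprop : ∀ v w, (Gr k M r).Adj v w → c v ≠ c w)
    (hneed : ∀ v j, 1 ≤ j → j < c v → ∃ u, (Gr k M r).Adj v u ∧ c u = j)
    (v : Fin M × Fin r) : c v ≤ k := by
  classical
  by_contra hcon
  push_neg at hcon
  set f : ℕ → ℕ := fun i =>
    if h : ∃ u, (Gr k M r).Adj v u ∧ c u = i then pt k h.choose.2.val else 0 with hfdef
  have hf : ∀ i ∈ Finset.Icc 1 (c v - 1),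
      ∃ u, (Gr k M r).Adj v u ∧ c u = i ∧ pt k u.2.val = f i := by
    intro i hi
    rw [Finset.mem_Icc] at hi
    have h : ∃ u, (Gr k M r).Adj v u ∧ c u = i := hneed v i hi.1 (by omega)
    refine ⟨h.choose, h.choose_spec.1, h.choose_spec.2, ?_⟩
    rw [hfdef]; dsimp only; rw [dif_pos h]
  have hmap : ∀ i ∈ Finset.Icc 1 (c v - 1), f i ∈ Finset.range (k - 1) := by
    intro i hi
    obtain ⟨u, _, _, hp⟩ := hf i hi
    rw [Finset.mem_range, ← hp]
    have := pt_le (k := k) u.2.val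
    omega
  have hinj : Set.InjOn f (Finset.Icc 1 (c v - 1)) := by
    intro i₁ hi₁ i₂ hi₂ hfe
    obtain ⟨u₁, hadj₁, hc₁, hp₁⟩ := hf i₁ (Finset.mem_coe.mp hi₁)
    obtain ⟨u₂, hadj₂, hc₂, hp₂⟩ := hf i₂ (Finset.mem_coe.mp hi₂)
    have hpe : pt k u₁.2.val = pt k u₂.2.val := by rw [hp₁, hp₂, hfe]
    have hcopy : u₁.1 = u₂.1 := by
      rcases (adj_classify hk hkr hr hM4 hM2 v u₁).mp hadj₁ with ⟨ha, hb⟩ | ⟨ha, hb⟩ <;>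
        rcases (adj_classify hk hkr hr hM4 hM2 v u₂).mp hadj₂ with ⟨ha', hb'⟩ | ⟨ha', hb'⟩
      · rw [ha, ha']
      · exact absurd (hpe ▸ hb') hb
      · exact absurd (hpe ▸ hb) hb'
      · exact Fin.ext (ha.trans ha'.symm)
    have := twin_color c hpos hprop hneed u₁ u₂ hcopy hpe
    rw [← hc₁, ← hc₂, this]
  have hcard := Finset.card_le_card_of_injOn f hmap hinj
  rw [Nat.card_Icc, Finset.card_range] at hcard
  omega

include hk hkr hr hM4 hM2 in
lemma gc_surj : ∀ i, 1 ≤ i → i ≤ k → ∃ v : Fin M × Fin r, gc k v = i := by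
  intro i hi1 hi2
  by_cases hik : i = k
  · exact ⟨((⟨0, by omega⟩ : Fin M), (⟨0, by omega⟩ : Fin r)),
      by rw [gc_special (by dsimp only; omega)]; omega⟩
  · have hjr : (if i = k - 1 then 0 else i) < r := by split_ifs <;> omega
    refine ⟨((⟨1, by omega⟩ : Fin M), (⟨if i = k - 1 then 0 else i, hjr⟩ : Fin r)), ?_⟩
    rw [gc_normal (by dsimp only; omega)]
    dsimp only
    rw [ccA (by omega)]
    unfold pt colA
    split_ifs <;> omega

end Main

lemma degree_eq_of_equiv {α β : Type*} (e : α ≃ β) (Gα : SimpleGraph α) (v : β)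
    [Fintype ((Gα.comap ⇑e.symm).neighborSet v)] [Fintype (Gα.neighborSet (e.symm v))] :
    (Gα.comap ⇑e.symm).degree v = Gα.degree (e.symm v) := by
  rw [← SimpleGraph.card_neighborFinset_eq_degree, ← SimpleGraph.card_neighborFinset_eq_degree]
  have h : (Gα.comap ⇑e.symm).neighborFinset v = (Gα.neighborFinset (e.symm v)).map e.toEmbedding := by
    ext z
    rw [Finset.mem_map_equiv, SimpleGraph.mem_neighborFinset, SimpleGraph.mem_neighborFinset]
    exact Iff.rfl
  rw [h, Finset.card_map]

end GRaux

open GRaux in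
theorem exists_large_regular_with_grundy (r k : ℕ) (hr : 4 ≤ r)
    (hk1 : 3 ≤ k) (hk2 : k ≤ r + 1) (N : ℕ) :
    ∃ (n : ℕ) (G : SimpleGraph (Fin n)) (_ : DecidableRel G.Adj),
      N ≤ n ∧ G.Connected ∧ G.IsRegularOfDegree r ∧ grundy G = k := by
  classical
  set M : ℕ := 2 * N + 4 with hMdef
  have hM4 : 4 ≤ M := by omega
  have hM2 : M % 2 = 0 := by omega
  set E : Fin M × Fin r ≃ Fin (M * r) := finProdFinEquiv with hEdef
  set G : SimpleGraph (Fin (M * r)) := (Gr k M r).comap E.symm with hGdef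
  have hadj : ∀ x y, G.Adj x y ↔ (Gr k M r).Adj (E.symm x) (E.symm y) := fun x y => Iff.rfl
  have hadj' : ∀ p q, (Gr k M r).Adj p q ↔ G.Adj (E p) (E q) := by
    intro p q
    rw [hadj, Equiv.symm_apply_apply, Equiv.symm_apply_apply]
  refine ⟨M * r, G, Classical.decRel _, ?_, ?_, ?_, ?_⟩
  · have : M ≤ M * r := Nat.le_mul_of_pos_right M (by omega)
    omega
  · have hc := gr_connected hk1 hk2 hr hM4 hM2
    rw [SimpleGraph.connected_iff] at hc ⊢
    constructor
    · intro x y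
      have h2 : G.Reachable (E (E.symm x)) (E (E.symm y)) :=
        (hc.1 (E.symm x) (E.symm y)).map
          (⟨(E : Fin M × Fin r → Fin (M * r)), fun {p q} h => (hadj' p q).mp h⟩ :
            (Gr k M r) →g G)
      simpa only [Equiv.apply_symm_apply] using h2
    · exact ⟨⟨0, by positivity⟩⟩
  · intro v
    have h := (GRaux.degree_eq_of_equiv E (Gr k M r) v).trans
      (gr_degree hk1 hk2 hr hM4 hM2 (E.symm v))
    convert h
  · have hmem : GrundyColorable G k := by
      refine ⟨fun x => gc k (E.symm x), ⟨⟨?_, ?_, ?_⟩, ?_, ?_⟩⟩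
      · exact fun v => (gc_pos hk1 hk2 hr hM4 hM2 (E.symm v)).1
      · intro v w h
        exact gc_proper hk1 hk2 hr hM4 hM2 _ _ ((hadj v w).mp h)
      · intro v j hj1 hj2
        obtain ⟨u, hu, hval⟩ := gc_needs hk1 hk2 hr hM4 hM2 (E.symm v) j hj1 hj2
        refine ⟨E u, ?_, ?_⟩
        · rw [hadj, Equiv.symm_apply_apply]
          exact hu
        · show gc k (E.symm (E u)) = j
          rw [Equiv.symm_apply_apply]
          exact hval
      · exact fun v => (gc_pos hk1 hk2 hr hM4 hM2 (E.symm v)).2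
      · intro j hj1 hj2
        obtain ⟨v, hv⟩ := gc_surj hk1 hk2 hr hM4 hM2 j hj1 hj2
        exact ⟨E v, by show gc k (E.symm (E v)) = j; rw [Equiv.symm_apply_apply]; exact hv⟩
    have hbound : ∀ b ∈ {k' | GrundyColorable G k'}, b ≤ k := by
      rintro b ⟨c, ⟨⟨hpos, hprop, hneed⟩, hle, hsurj⟩⟩
      rcases Nat.eq_zero_or_pos b with hb0 | hb0
      · omega
      · obtain ⟨v, hv⟩ := hsurj b hb0 le_rfl
        have hprop' : ∀ p q, (Gr k M r).Adj p q → c (E p) ≠ c (E q) :=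
          fun p q h => hprop _ _ ((hadj' p q).mp h)
        have hneed' : ∀ p j, 1 ≤ j → j < c (E p) → ∃ u, (Gr k M r).Adj p u ∧ c (E u) = j := by
          intro p j h1 h2
          obtain ⟨u, hu, hcu⟩ := hneed (E p) j h1 h2
          refine ⟨E.symm u, ?_, ?_⟩
          · rw [hadj'] ; rw [Equiv.apply_symm_apply]; exact hu
          · rw [Equiv.apply_symm_apply]; exact hcu
        have := gr_upper hk1 hk2 hr hM4 hM2 (fun p => c (E p))
          (fun p => hpos (E p)) hprop' hneed' (E.symm v)
        rw [Equiv.apply_symm_apply, hv] at this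
        exact this
    show sSup {k' | GrundyColorable G k'} = k
    apply le_antisymm
    · exact csSup_le ⟨k, hmem⟩ hbound
    · exact le_csSup ⟨k, hbound⟩ hmem
end
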